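/- arXiv:2503.06826 — 4 statements merged into one kernel-verified Lean document; each statement's English description precedes it below -/
import Mathlib

section
/- There is an absolute constant n₀ such that the following holds: if G is a graph on n ≥ n₀ vertices with average degree d > 1 (i.e. 2|E(G)|/n = d), and m = 6n·ln(d+2)/ln n, then G is not m-minor-universal; in fact there exists a graph H with at most m vertices and at most m edges which is not a minor of G. -/
open Finset

/-- `H` is a minor of `G`: there are disjoint branch sets, one for each vertex of `H`,
each inducing a connected subgraph of `G`, with an edge of `G` between the branch sets of
any two adjacent vertices of `H`. -/
def IsMinor {W V : Type} (H : SimpleGraph W) (G : SimpleGraph V) : Prop :=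
  ∃ f : W → Set V,
    (∀ h h', h ≠ h' → Disjoint (f h) (f h')) ∧
    (∀ h, (G.induce (f h)).Connected) ∧
    (∀ h h', H.Adj h h' → ∃ u ∈ f h, ∃ v ∈ f h', G.Adj u v)

lemma sum_choose_le_choose_add (E t : ℕ) :
    ∑ i ∈ range (t + 1), E.choose i ≤ (E + t).choose t := by
  induction t with
  | zero => simp
  | succ t ih =>
    rw [Finset.sum_range_succ]
    calc ∑ i ∈ range (t+1), E.choose i + E.choose (t+1)
        ≤ (E+t).choose t + (E+t).choose (t+1) :=
          Nat.add_le_add ih (Nat.choose_le_choose _ (by omega))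
      _ = (E + (t+1)).choose (t+1) := by
          rw [show E + (t+1) = (E+t) + 1 by ring, Nat.choose_succ_succ']

lemma pow_le_three_pow_mul_factorial (t : ℕ) : (t : ℝ) ^ t ≤ 3 ^ t * t.factorial := by
  induction t with
  | zero => simp
  | succ t ih =>
    rcases Nat.eq_zero_or_pos t with h | h
    · subst h; norm_num
    have ht : (0:ℝ) < t := by exact_mod_cast h
    have key : ((t:ℝ) + 1) ^ t ≤ 3 * (t:ℝ) ^ t := by
      have h1 : ((t:ℝ) + 1) ^ t = ((1 + 1/t) * t) ^ t := by
        field_simp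
      rw [h1, mul_pow]
      have h2 : (1 + 1/(t:ℝ)) ^ t ≤ 3 := by
        have h3 : (1 + 1/(t:ℝ)) ≤ Real.exp (1/t) := by
          have := Real.add_one_le_exp (1/(t:ℝ)); linarith
        calc (1 + 1/(t:ℝ)) ^ t ≤ (Real.exp (1/t)) ^ t := by
              apply pow_le_pow_left₀ (by positivity) h3
          _ = Real.exp 1 := by
              rw [← Real.exp_nat_mul]; congr 1; field_simp
          _ ≤ 3 := by linarith [Real.exp_one_lt_d9]
      exact mul_le_mul_of_nonneg_right h2 (by positivity)
    calc ((t+1 : ℕ) : ℝ) ^ (t+1) = ((t:ℝ)+1) * ((t:ℝ)+1)^t := by push_cast; ring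
      _ ≤ ((t:ℝ)+1) * (3 * (t:ℝ)^t) := by
          apply mul_le_mul_of_nonneg_left key (by positivity)
      _ ≤ ((t:ℝ)+1) * (3 * (3^t * t.factorial)) := by
          apply mul_le_mul_of_nonneg_left (by apply mul_le_mul_of_nonneg_left ih (by norm_num)) (by positivity)
      _ = 3 ^ (t+1) * ((t+1) * t.factorial : ℕ) := by push_cast; ring
      _ = 3 ^ (t+1) * (t+1).factorial := by rw [Nat.factorial_succ]

lemma choose_le_rpow (N t : ℕ) (ht : 0 < t) : (N.choose t : ℝ) ≤ (3 * N / t) ^ t := by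
  have h1 : (N.choose t : ℝ) ≤ (N:ℝ) ^ t / t.factorial := Nat.choose_le_pow_div t N
  have h2 := pow_le_three_pow_mul_factorial t
  have hf : (0:ℝ) < t.factorial := by exact_mod_cast t.factorial_pos
  have ht' : (0:ℝ) < t := by exact_mod_cast ht
  calc (N.choose t : ℝ) ≤ (N:ℝ)^t / t.factorial := h1
    _ ≤ (3:ℝ)^t * (N:ℝ)^t / (t:ℝ)^t := by
        rw [div_le_div_iff₀ hf (by positivity)]
        calc (N:ℝ)^t * (t:ℝ)^t ≤ (N:ℝ)^t * (3^t * t.factorial) := by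
              apply mul_le_mul_of_nonneg_left h2 (by positivity)
          _ = 3^t * (N:ℝ)^t * t.factorial := by ring
    _ = (3 * N / t) ^ t := by rw [div_pow, mul_pow]

lemma pow_div_le_choose (N t : ℕ) (ht : 0 < t) :
    (((N + 1 - t : ℕ) : ℝ) / t) ^ t ≤ N.choose t := by
  have h1 := Nat.pow_le_choose (α := ℝ) t N
  have h2 : ((t.factorial : ℝ)) ≤ (t:ℝ)^t := by exact_mod_cast Nat.factorial_le_pow t
  have ht' : (0:ℝ) < t := by exact_mod_cast ht
  calc (((N + 1 - t : ℕ):ℝ) / t) ^ t = ((N+1-t : ℕ):ℝ)^t / (t:ℝ)^t := by rw [div_pow]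
    _ ≤ ((N+1-t : ℕ):ℝ)^t / t.factorial := by
        apply div_le_div_of_nonneg_left (by positivity) (by exact_mod_cast t.factorial_pos) h2
    _ ≤ N.choose t := h1

lemma exists_connector_aux {α : Type} [Fintype α] [DecidableEq α] (G : SimpleGraph α)
    (hc : G.Connected) :
    ∃ F : Finset (Sym2 α), ↑F ⊆ G.edgeSet ∧ F.card + 1 = Fintype.card α ∧
      ∀ u v : α, (SimpleGraph.fromEdgeSet ↑F).Reachable u v := by
  have main : ∀ j, j + 1 ≤ Fintype.card α → ∃ (S : Finset α) (F : Finset (Sym2 α)),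
      S.card = j + 1 ∧ ↑F ⊆ G.edgeSet ∧ F.card = j ∧
      (∀ e ∈ F, ∀ v ∈ e, v ∈ S) ∧
      (∀ u ∈ S, ∀ v ∈ S, (SimpleGraph.fromEdgeSet (↑F : Set (Sym2 α))).Reachable u v) := by
    intro j
    induction j with
    | zero =>
      intro _
      obtain ⟨v⟩ := hc.nonempty
      refine ⟨{v}, ∅, by simp, by simp, by simp, by simp, ?_⟩
      intro u hu w hw
      simp only [Finset.mem_singleton] at hu hw
      subst hu; subst hw
      exact SimpleGraph.Reachable.refl _
    | succ j ih =>
      intro hj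
      obtain ⟨S, F, hScard, hFsub, hFcard, hFin, hreach⟩ := ih (by omega)
      have hex : ∃ x, x ∉ S := by
        by_contra h
        push_neg at h
        have : S = Finset.univ := Finset.eq_univ_iff_forall.mpr h
        rw [this, Finset.card_univ] at hScard
        omega
      obtain ⟨x, hx⟩ := hex
      have hS0 : S.Nonempty := Finset.card_pos.mp (by omega)
      obtain ⟨s₀, hs₀⟩ := hS0
      obtain ⟨p⟩ := hc s₀ x
      obtain ⟨d, _, hd1, hd2⟩ := p.exists_boundary_dart (↑S : Set α) (by simpa using hs₀)
        (by simpa using hx)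
      simp only [Finset.mem_coe] at hd1 hd2
      have hadj : G.Adj d.toProd.1 d.toProd.2 := d.adj
      have hne : d.toProd.1 ≠ d.toProd.2 := hadj.ne
      have hnewF : s(d.toProd.1, d.toProd.2) ∉ F := by
        intro hmem
        exact hd2 (hFin _ hmem d.toProd.2 (Sym2.mem_mk_right _ _))
      refine ⟨insert d.toProd.2 S, insert s(d.toProd.1, d.toProd.2) F, ?_, ?_, ?_, ?_, ?_⟩
      · rw [Finset.card_insert_of_notMem hd2, hScard]
      · intro e he
        simp only [Finset.coe_insert, Set.mem_insert_iff] at he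
        rcases he with rfl | he
        · exact hadj
        · exact hFsub he
      · rw [Finset.card_insert_of_notMem hnewF, hFcard]
      · intro e he v hv
        rcases Finset.mem_insert.mp he with rfl | he
        · rcases Sym2.mem_iff.mp hv with rfl | rfl
          · exact Finset.mem_insert_of_mem hd1
          · exact Finset.mem_insert_self _ _
        · exact Finset.mem_insert_of_mem (hFin e he v hv)
      · have hmono : SimpleGraph.fromEdgeSet (↑F : Set (Sym2 α)) ≤
            SimpleGraph.fromEdgeSet (↑(insert s(d.toProd.1, d.toProd.2) F) : Set (Sym2 α)) := by
          apply SimpleGraph.fromEdgeSet_mono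
          rw [Finset.coe_insert]
          exact Set.subset_insert _ _
        have hadjnew : (SimpleGraph.fromEdgeSet
            (↑(insert s(d.toProd.1, d.toProd.2) F) : Set (Sym2 α))).Adj d.toProd.1 d.toProd.2 := by
          rw [SimpleGraph.fromEdgeSet_adj]
          exact ⟨by simp, hne⟩
        have hold : ∀ u ∈ S, ∀ v ∈ S, (SimpleGraph.fromEdgeSet
            (↑(insert s(d.toProd.1, d.toProd.2) F) : Set (Sym2 α))).Reachable u v :=
          fun u hu v hv => (hreach u hu v hv).mono hmono
        intro u hu v hv
        rcases Finset.mem_insert.mp hu with rfl | hu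
        · rcases Finset.mem_insert.mp hv with rfl | hv
          · exact SimpleGraph.Reachable.refl _
          · exact (hadjnew.symm.reachable).trans (hold _ hd1 _ hv)
        · rcases Finset.mem_insert.mp hv with rfl | hv
          · exact (hold _ hu _ hd1).trans hadjnew.reachable
          · exact hold _ hu _ hv
  have hcard : 1 ≤ Fintype.card α := by
    obtain ⟨v⟩ := hc.nonempty
    exact Fintype.card_pos_iff.mpr ⟨v⟩
  obtain ⟨S, F, hScard, hFsub, hFcard, hFin, hreach⟩ :=
    main (Fintype.card α - 1) (by omega)
  have hSuniv : S = Finset.univ := Finset.eq_univ_of_card _ (by omega)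
  exact ⟨F, hFsub, by omega, fun u v => hreach u (hSuniv ▸ Finset.mem_univ u)
    v (hSuniv ▸ Finset.mem_univ v)⟩

lemma exists_connector {V : Type} [Fintype V] [DecidableEq V] (G : SimpleGraph V) (W : Set V)
    (hW : (G.induce W).Connected) :
    ∃ F : Finset (Sym2 V), ↑F ⊆ G.edgeSet ∧ (∀ e ∈ F, ∀ v ∈ e, v ∈ W) ∧
      F.card + 1 ≤ W.ncard ∧
      ∀ u ∈ W, ∀ v ∈ W, (SimpleGraph.fromEdgeSet (↑F : Set (Sym2 V))).Reachable u v := by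
  classical
  obtain ⟨F₀, hF₀sub, hF₀card, hF₀reach⟩ := exists_connector_aux (G.induce W) hW
  refine ⟨F₀.image (Sym2.map Subtype.val), ?_, ?_, ?_, ?_⟩
  · intro e he
    simp only [Finset.coe_image, Set.mem_image, Finset.mem_coe] at he
    obtain ⟨e₀, he₀, rfl⟩ := he
    induction e₀ with
    | h a b =>
      have : (G.induce W).Adj a b := hF₀sub he₀
      simpa using this
  · intro e he v hv
    simp only [Finset.mem_image] at he
    obtain ⟨e₀, he₀, rfl⟩ := he
    induction e₀ with
    | h a b =>
      simp only [Sym2.map_pair_eq, Sym2.mem_iff] at hv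
      rcases hv with rfl | rfl
      · exact a.2
      · exact b.2
  · calc (F₀.image (Sym2.map Subtype.val)).card + 1 ≤ F₀.card + 1 :=
          Nat.add_le_add_right (Finset.card_image_le) 1
      _ = Fintype.card ↥W := hF₀card
      _ = W.ncard := by rw [← Nat.card_coe_set_eq, Nat.card_eq_fintype_card]
  · intro u hu v hv
    have hmap : ∀ a b : ↥W, (SimpleGraph.fromEdgeSet (↑F₀ : Set (Sym2 ↥W))).Adj a b →
        (SimpleGraph.fromEdgeSet (↑(F₀.image (Sym2.map Subtype.val)) : Set (Sym2 V))).Adj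
          a.val b.val := by
      intro a b hab
      rw [SimpleGraph.fromEdgeSet_adj] at hab ⊢
      refine ⟨?_, fun h => hab.2 (Subtype.coe_injective h)⟩
      simp only [Finset.coe_image, Set.mem_image, Finset.mem_coe]
      exact ⟨s(a, b), hab.1, by simp⟩
    exact SimpleGraph.Reachable.map ⟨Subtype.val, fun h => hmap _ _ h⟩ (hF₀reach ⟨u, hu⟩ ⟨v, hv⟩)

lemma exists_encoding {V : Type} [Fintype V] [DecidableEq V] (G : SimpleGraph V)
    {k : ℕ} (H : SimpleGraph (Fin k)) [DecidableRel H.Adj]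
    (hm : IsMinor H G) :
    ∃ (F C : Finset (Sym2 V)) (lam : Fin k → V),
      ↑F ⊆ G.edgeSet ∧ F.card ≤ Fintype.card V ∧
      ↑C ⊆ G.edgeSet ∧ C.card ≤ 2 * H.edgeSet.ncard ∧
      ∀ h h' : Fin k, (H.Adj h h' ↔ ∃ u v : V, s(u, v) ∈ C ∧
        (SimpleGraph.fromEdgeSet (↑F : Set (Sym2 V))).Reachable (lam h) u ∧
        (SimpleGraph.fromEdgeSet (↑F : Set (Sym2 V))).Reachable (lam h') v) := by
  classical
  obtain ⟨f, hdisj, hconn, hedge⟩ := hm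
  have hcon := fun h => exists_connector G (f h) (hconn h)
  choose Fh hFsub hFin hFcard hFreach using hcon
  have hlam : ∀ h, ∃ x, x ∈ f h := by
    intro h
    obtain ⟨⟨x, hx⟩⟩ := (hconn h).nonempty
    exact ⟨x, hx⟩
  choose lam hlammem using hlam
  set F : Finset (Sym2 V) := univ.biUnion Fh with hF
  -- choice of connecting edges
  have hqex : ∀ p : Fin k × Fin k, ∃ qp : V × V, H.Adj p.1 p.2 →
      (G.Adj qp.1 qp.2 ∧ qp.1 ∈ f p.1 ∧ qp.2 ∈ f p.2) := by
    intro p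
    by_cases hp : H.Adj p.1 p.2
    · obtain ⟨u, hu, v, hv, huv⟩ := hedge _ _ hp
      exact ⟨(u, v), fun _ => ⟨huv, hu, hv⟩⟩
    · exact ⟨(lam p.1, lam p.1), fun h => absurd h hp⟩
  choose q hq using hqex
  set A : Finset (Fin k × Fin k) := univ.filter (fun p => H.Adj p.1 p.2) with hA
  set C : Finset (Sym2 V) := A.image (fun p => s((q p).1, (q p).2)) with hC
  -- reachability stays inside a branch set
  have hFmono : ∀ h : Fin k, SimpleGraph.fromEdgeSet (↑(Fh h) : Set (Sym2 V)) ≤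
      SimpleGraph.fromEdgeSet (↑F : Set (Sym2 V)) := by
    intro h
    apply SimpleGraph.fromEdgeSet_mono
    intro e he
    simp only [Finset.mem_coe] at he ⊢
    exact Finset.mem_biUnion.mpr ⟨h, Finset.mem_univ h, he⟩
  have hclosed : ∀ (g : Fin k) (x y : V),
      (SimpleGraph.fromEdgeSet (↑F : Set (Sym2 V))).Reachable x y → x ∈ f g → y ∈ f g := by
    intro g x y hr
    obtain ⟨p⟩ := hr
    induction p with
    | nil => exact id
    | cons hadj p ih =>
      rename_i x w y
      intro hx
      apply ih
      rw [SimpleGraph.fromEdgeSet_adj] at hadj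
      obtain ⟨hmem, hne⟩ := hadj
      simp only [Finset.mem_coe, hF, Finset.mem_biUnion] at hmem
      obtain ⟨h₀, _, hmem⟩ := hmem
      have hxh₀ : x ∈ f h₀ := hFin h₀ _ hmem x (Sym2.mem_mk_left _ _)
      have hwh₀ : w ∈ f h₀ := hFin h₀ _ hmem w (Sym2.mem_mk_right _ _)
      have : h₀ = g := by
        by_contra hne'
        exact Set.disjoint_left.mp (hdisj h₀ g hne') hxh₀ hx
      exact this ▸ hwh₀
  refine ⟨F, C, lam, ?_, ?_, ?_, ?_, ?_⟩
  · intro e he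
    simp only [Finset.mem_coe, hF, Finset.mem_biUnion] at he
    obtain ⟨h, _, he⟩ := he
    exact hFsub h (by exact_mod_cast he)
  · -- card F ≤ n
    calc F.card ≤ ∑ h : Fin k, (Fh h).card := Finset.card_biUnion_le
      _ ≤ ∑ h : Fin k, ((f h).toFinset.card - 1) := by
          apply Finset.sum_le_sum
          intro h _
          have := hFcard h
          rw [Set.ncard_eq_toFinset_card'] at this
          omega
      _ ≤ ∑ h : Fin k, (f h).toFinset.card := by
          apply Finset.sum_le_sum; intro h _; omega
      _ = (univ.biUnion (fun h => (f h).toFinset)).card := by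
          rw [Finset.card_biUnion]
          intro h _ h' _ hne
          simp only [Function.onFun]
          rw [Finset.disjoint_left]
          intro a ha ha'
          rw [Set.mem_toFinset] at ha ha'
          exact Set.disjoint_left.mp (hdisj h h' hne) ha ha'
      _ ≤ Fintype.card V := by
          rw [← Finset.card_univ]
          exact Finset.card_le_card (Finset.subset_univ _)
  · intro e he
    simp only [Finset.mem_coe, hC, Finset.mem_image] at he
    obtain ⟨p, hp, rfl⟩ := he
    simp only [hA, Finset.mem_filter] at hp
    exact (hq p hp.2).1
  · calc C.card ≤ A.card := Finset.card_image_le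
      _ = 2 * H.edgeFinset.card := by
          rw [SimpleGraph.two_mul_card_edgeFinset]
      _ = 2 * H.edgeSet.ncard := by
          rw [SimpleGraph.edgeFinset, ← Set.ncard_eq_toFinset_card']
  · intro h h'
    constructor
    · intro hadj
      refine ⟨(q (h, h')).1, (q (h, h')).2, ?_, ?_, ?_⟩
      · simp only [hC, Finset.mem_image]
        exact ⟨(h, h'), by simp [hA, hadj], rfl⟩
      · exact ((hFreach h _ (hlammem h) _ (hq (h, h') hadj).2.1).mono (hFmono h))
      · exact ((hFreach h' _ (hlammem h') _ (hq (h, h') hadj).2.2).mono (hFmono h'))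
    · rintro ⟨u, v, hmemC, hru, hrv⟩
      have hu : u ∈ f h := hclosed h _ _ hru (hlammem h)
      have hv : v ∈ f h' := hclosed h' _ _ hrv (hlammem h')
      simp only [hC, Finset.mem_image] at hmemC
      obtain ⟨p, hp, heq⟩ := hmemC
      simp only [hA, Finset.mem_filter] at hp
      obtain ⟨hu₀, hv₀⟩ := (hq p hp.2).2
      have hsame : ∀ (a b : Fin k) (x : V), x ∈ f a → x ∈ f b → a = b := by
        intro a b x hxa hxb
        by_contra hne
        exact Set.disjoint_left.mp (hdisj a b hne) hxa hxb
      rcases Sym2.eq_iff.mp heq with ⟨h1, h2⟩ | ⟨h1, h2⟩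
      · have e1 : p.1 = h := hsame _ _ _ (h1 ▸ hu₀) hu
        have e2 : p.2 = h' := hsame _ _ _ (h2 ▸ hv₀) hv
        exact e1 ▸ e2 ▸ hp.2
      · have e1 : p.1 = h' := hsame _ _ _ (h1 ▸ hu₀) hv
        have e2 : p.2 = h := hsame _ _ _ (h2 ▸ hv₀) hu
        exact (e1 ▸ e2 ▸ hp.2).symm

set_option maxHeartbeats 4000000 in
lemma counting_numeric (n E s k : ℕ) (d : ℝ)
    (hd : 1 < d) (hE : 2 * (E:ℝ) = d * n)
    (hL : 10000 ≤ Real.log n)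
    (hm1 : (s:ℝ) ≤ 6 * n * Real.log (d+2) / Real.log n)
    (hm2 : 6 * n * Real.log (d+2) / Real.log n < (s:ℝ) + 1)
    (hsn : s ≤ n)
    (hk1 : 6 * (s:ℝ) / Real.log n + 1 ≤ k)
    (hk2 : (k:ℝ) ≤ 6 * s / (Real.log n - 1) + 7) :
    ((E+n).choose n : ℝ) * ((E + 2*s).choose (2*s) : ℝ) * (n:ℝ)^k
      < ((k.choose 2).choose s : ℝ) := by
  have h1 : (0:ℝ) < Real.log n := by linarith
  have hn2' : (1:ℝ) < (n:ℝ) := by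
    by_contra h
    push_neg at h
    have : Real.log (n:ℝ) ≤ 0 := Real.log_nonpos (by positivity) h
    linarith
  have hNexp' : (n:ℝ) = Real.exp (Real.log n) := (Real.exp_log (by linarith)).symm
  obtain ⟨L, hLdef⟩ : ∃ x : ℝ, Real.log (n:ℝ) = x := ⟨_, rfl⟩
  obtain ⟨S, hSdef⟩ : ∃ x : ℝ, ((s:ℝ)) = x := ⟨_, rfl⟩
  obtain ⟨N, hNdef⟩ : ∃ x : ℝ, ((n:ℝ)) = x := ⟨_, rfl⟩
  rw [hLdef] at h1 hL hm1 hm2 hk1 hk2 hNexp'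
  rw [hSdef] at hm1 hm2 hk1 hk2
  rw [hNdef] at hE hm1 hm2 hn2' hNexp'
  rw [hNdef]
  have hn2 : (1:ℝ) < N := hn2'
  have hN0 : (0:ℝ) < N := by linarith
  have hNexp : N = Real.exp L := hNexp'
  have hNL : L + 1 ≤ N := by
    rw [hNexp]; linarith [Real.add_one_le_exp L]
  have hN4 : L^4/256 ≤ N := by
    have h0 : Real.exp L = (Real.exp (L/4))^4 := by
      rw [← Real.exp_nat_mul]; congr 1; push_cast; ring
    have h0b : (L/4)^4 ≤ (Real.exp (L/4))^4 := by
      apply pow_le_pow_left₀ (by positivity)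
      linarith [Real.add_one_le_exp (L/4)]
    have h0c : (L/4)^4 = L^4/256 := by ring
    rw [hNexp, h0]
    linarith
  have hsqrtL : 100 ≤ Real.sqrt L := by
    have := Real.sqrt_le_sqrt hL
    rwa [show (10000:ℝ) = 100^2 by norm_num, Real.sqrt_sq (by norm_num)] at this
  have hsqL : Real.sqrt L * Real.sqrt L = L := Real.mul_self_sqrt (le_of_lt h1)
  have hlnL : Real.log L ≤ L/50 := by
    have h2 : Real.log L = 2 * Real.log (Real.sqrt L) := by
      rw [Real.log_sqrt (le_of_lt h1)]; ring
    have h3 : Real.log (Real.sqrt L) ≤ Real.sqrt L - 1 :=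
      Real.log_le_sub_one_of_pos (by positivity)
    have h4 : Real.sqrt L * 100 ≤ L := by
      have := mul_le_mul_of_nonneg_left hsqrtL (Real.sqrt_nonneg L)
      linarith
    linarith
  have hlog3 : (1:ℝ) < Real.log (d+2) := by
    have h5 : Real.log (Real.exp 1) < Real.log (d+2) := by
      apply Real.log_lt_log (Real.exp_pos 1)
      linarith [Real.exp_one_lt_d9]
    rwa [Real.log_exp] at h5
  have hlnL0 : (0:ℝ) < Real.log L := by
    have : Real.log 1 < Real.log L := by
      apply Real.log_lt_log one_pos; linarith
    simpa using this
  have hSN : S ≤ N := by rw [← hSdef, ← hNdef]; exact_mod_cast hsn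
  have hNup : 6 * N * Real.log (d+2) < (S+1) * L := by
    have h6 := hm2
    rw [div_lt_iff₀ h1] at h6
    linarith
  have h11 : 6 * N ≤ 6 * N * Real.log (d+2) := by
    have := mul_nonneg (by linarith : (0:ℝ) ≤ 6*N) (by linarith : (0:ℝ) ≤ Real.log (d+2) - 1)
    linarith
  have h6N : 6 * N < (S + 1) * L := by linarith
  have hS0 : (0:ℝ) < S := by
    have hS0' : (0:ℝ) ≤ S := by rw [← hSdef]; positivity
    rcases eq_or_lt_of_le hS0' with h | h
    · exfalso
      rw [← h] at h6N
      simp only [zero_add, one_mul] at h6N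
      linarith
    · exact h
  have hSL5 : 5 * N ≤ S * L := by linarith
  have hS3L : 3 * L^2 ≤ S := by
    have h12 : 5 * (L^4/256) ≤ S * L := by linarith
    have h13a : 10000 * L^3 ≤ L * L^3 :=
      mul_le_mul_of_nonneg_right hL (by positivity)
    have hL3 : (0:ℝ) ≤ L^3 := by positivity
    have h13 : 3 * L^3 ≤ 5 * (L^4/256) := by linarith
    have h14 : (3 * L^2) * L ≤ S * L := by linarith
    exact le_of_mul_le_mul_right h14 h1
  have hSbig : (100000000:ℝ) ≤ S := by linarith [hS3L, sq_nonneg (L - 10000), hL]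
  have h16 : L ≤ 0.01 * (S * L) := by
    have := mul_nonneg (by linarith : (0:ℝ) ≤ 0.01 * S - 1) (le_of_lt h1)
    linarith
  have hNS : N ≤ 0.169 * (S * L) := by linarith
  have hNd6 : N * Real.log (d+2) ≤ 0.17 * (S * L) := by linarith
  have hld : Real.log (d+2) ≤ 0.17 * L := by
    have h19a : S * L ≤ N * L := mul_le_mul_of_nonneg_right hSN (le_of_lt h1)
    have h19b : L ≤ 0.01 * (N * L) := by
      have := mul_nonneg (by linarith : (0:ℝ) ≤ 0.01 * N - 1) (le_of_lt h1)
      linarith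
    have h20 : Real.log (d+2) * (6*N) < (1.01*L/6) * (6*N) := by
      have expand : (1.01*L/6) * (6*N) = 1.01*(N*L) := by ring
      have expand2 : Real.log (d+2) * (6*N) = 6*N*Real.log (d+2) := by ring
      rw [expand, expand2]
      calc 6*N*Real.log (d+2) < (S+1)*L := hNup
        _ = S*L + L := by ring
        _ ≤ N*L + L := by linarith
        _ ≤ 1.01*(N*L) := by linarith
    have h21 := lt_of_mul_lt_mul_right h20 (by positivity : (0:ℝ) ≤ 6*N)
    linarith
  have hd0 : (0:ℝ) < d := by linarith
  have hlogd : Real.log d ≤ 0.17 * L := by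
    have := Real.log_le_log hd0 (show d ≤ d + 2 by linarith)
    linarith
  have hlogd0 : (0:ℝ) ≤ Real.log d + Real.log L := by
    have hld0 : (0:ℝ) ≤ Real.log d := Real.log_nonneg (by linarith)
    linarith
  have hlog5 : Real.log 5 ≤ 1.7 := by
    rw [Real.log_le_iff_le_exp (by norm_num)]
    have he7 : Real.exp 0.7 = (Real.exp 0.175)^4 := by
      rw [← Real.exp_nat_mul]; congr 1; norm_num
    have h22 : (1.175:ℝ)^4 ≤ (Real.exp 0.175)^4 := by
      apply pow_le_pow_left₀ (by norm_num)
      linarith [Real.add_one_le_exp (0.175:ℝ)]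
    have h23 : Real.exp 1.7 = Real.exp 1 * Real.exp 0.7 := by
      rw [← Real.exp_add]; norm_num
    have hA : (1.90:ℝ) ≤ Real.exp 0.7 := by
      rw [he7]
      calc (1.90:ℝ) ≤ 1.175^4 := by norm_num
        _ ≤ (Real.exp 0.175)^4 := h22
    have hB : (2.7182818283:ℝ) ≤ Real.exp 1 := le_of_lt Real.exp_one_gt_d9
    calc (5:ℝ) ≤ 2.7182818283 * 1.90 := by norm_num
      _ ≤ Real.exp 1 * Real.exp 0.7 :=
          mul_le_mul hB hA (by norm_num) (le_of_lt (Real.exp_pos 1))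
      _ = Real.exp 1.7 := h23.symm
  have hlogS : 0.98 * L ≤ Real.log S := by
    have h24 : N / L ≤ S := by
      rw [div_le_iff₀ h1]; linarith
    have h25 : Real.log (N / L) ≤ Real.log S :=
      Real.log_le_log (by positivity) h24
    rw [Real.log_div (by positivity) (by positivity)] at h25
    have h26 : Real.log N = L := by rw [← hNdef, ← hLdef]
    rw [h26] at h25
    linarith
  have hs0 : 0 < s := by
    rcases Nat.eq_zero_or_pos s with h | h
    · exfalso; rw [← hSdef, h] at hS0; norm_num at hS0
    · exact h
  have hn0 : 0 < n := by
    rcases Nat.eq_zero_or_pos n with h | h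
    · exfalso; rw [← hNdef, h] at hn2; norm_num at hn2
    · exact h
  have hSL0 : (0:ℝ) < S * L := by positivity
  -- scalar inequality
  have hscalar : N * Real.log (5*d) + (2*S) * Real.log (d*L) + k * L
      < S * Real.log (9 * S / L^2) := by
    have e1 : Real.log (5*d) = Real.log 5 + Real.log d :=
      Real.log_mul (by norm_num) (by linarith)
    have e2 : Real.log (d*L) = Real.log d + Real.log L :=
      Real.log_mul (by linarith) (by linarith)
    have e3 : Real.log (9 * S / L^2) = Real.log 9 + Real.log S - 2 * Real.log L := by
      rw [Real.log_div (by positivity) (by positivity),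
        Real.log_mul (by norm_num) (by positivity), Real.log_pow]
      push_cast; ring
    rw [e1, e2, e3]
    have u1 : N * Real.log 5 ≤ N * 1.7 :=
      mul_le_mul_of_nonneg_left hlog5 (le_of_lt hN0)
    have u1b : N * 1.7 ≤ 1.7 * (0.169 * (S * L)) := by linarith
    have u2 : N * Real.log d ≤ N * Real.log (d+2) :=
      mul_le_mul_of_nonneg_left (Real.log_le_log hd0 (by linarith)) (le_of_lt hN0)
    have u3 : S * Real.log d ≤ S * (0.17 * L) :=
      mul_le_mul_of_nonneg_left hlogd (le_of_lt hS0)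
    have u4 : S * Real.log L ≤ S * (L/50) :=
      mul_le_mul_of_nonneg_left hlnL (le_of_lt hS0)
    have u5 : S * (0.98 * L) ≤ S * Real.log S :=
      mul_le_mul_of_nonneg_left hlogS (le_of_lt hS0)
    have u6 : (0:ℝ) ≤ S * Real.log 9 :=
      mul_nonneg (le_of_lt hS0) (Real.log_nonneg (by norm_num))
    have t3 : (k:ℝ) * L ≤ 0.002 * (S * L) := by
      have hL1 : (1:ℝ) < L - 1 := by linarith
      have w1 : 6 * S / (L-1) ≤ 6.01 * S / L := by
        rw [div_le_div_iff₀ (by linarith) h1]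
        have := mul_nonneg (le_of_lt hS0) (by linarith : (0:ℝ) ≤ 0.01*L - 6.01)
        linarith
      have w2 : (k:ℝ) ≤ 6.01 * S / L + 7 := by linarith
      have w3 : (k:ℝ) * L ≤ (6.01 * S / L + 7) * L :=
        mul_le_mul_of_nonneg_right w2 (le_of_lt h1)
      have w4 : (6.01 * S / L + 7) * L = 6.01 * S + 7 * L := by field_simp
      have w5 : 7 * L ≤ 0.0007 * (S * L) := by
        have := mul_nonneg (by linarith : (0:ℝ) ≤ 0.0007 * S - 7) (le_of_lt h1)
        linarith
      have w6 : 6.01 * S ≤ 0.001 * (S * L) := by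
        have := mul_nonneg (le_of_lt hS0) (by linarith : (0:ℝ) ≤ 0.001 * L - 6.01)
        linarith
      linarith
    linarith [u1, u1b, u2, u3, u4, u5, u6, t3, hNd6, hSL0]
  -- assembling
  have h5d : (0:ℝ) < 5 * d := by linarith
  have hdL : (0:ℝ) < d * L := by positivity
  have hT1 : ((E+n).choose n : ℝ) ≤ Real.exp (N * Real.log (5*d)) := by
    have b1 : ((E+n).choose n : ℝ) ≤ (3 * ((E:ℝ) + N) / N) ^ n := by
      have h := choose_le_rpow (E+n) n hn0
      push_cast at h
      rw [hNdef] at h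
      exact h
    have b2 : 3 * ((E:ℝ) + N) / N ≤ 5 * d := by
      rw [div_le_iff₀ hN0]
      have v1 : N ≤ d * N := by
        have := mul_nonneg (by linarith : (0:ℝ) ≤ d - 1) (le_of_lt hN0)
        linarith
      linarith
    have b3 : Real.exp (N * Real.log (5*d)) = (5*d) ^ n := by
      rw [← hNdef, Real.exp_nat_mul, Real.exp_log h5d]
    calc ((E+n).choose n : ℝ) ≤ (3 * ((E:ℝ) + N) / N) ^ n := b1
      _ ≤ (5*d) ^ n := pow_le_pow_left₀ (by positivity) b2 n
      _ = Real.exp (N * Real.log (5*d)) := b3.symm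
  have hT2 : ((E + 2*s).choose (2*s) : ℝ) ≤ Real.exp ((2*S) * Real.log (d*L)) := by
    have b1 : ((E + 2*s).choose (2*s) : ℝ) ≤ (3 * ((E:ℝ) + 2*S) / (2*S)) ^ (2*s) := by
      have h := choose_le_rpow (E+2*s) (2*s) (by omega)
      push_cast at h
      rw [hSdef] at h
      exact h
    have b2 : 3 * ((E:ℝ) + 2*S) / (2*S) ≤ d * L := by
      rw [div_le_iff₀ (by positivity)]
      have c1 : d * N ≤ d * (0.169 * (S * L)) :=
        mul_le_mul_of_nonneg_left hNS (le_of_lt hd0)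
      have c2 : (E:ℝ) ≤ d * (0.169 * (S * L)) / 2 := by linarith
      have c3 : L ≤ d * L := by
        have := mul_nonneg (by linarith : (0:ℝ) ≤ d - 1) (le_of_lt h1)
        linarith
      have c4 : 6 * S ≤ 0.0006 * (S * (d * L)) := by
        have := mul_nonneg (le_of_lt hS0) (by linarith : (0:ℝ) ≤ 0.0006 * (d*L) - 6)
        linarith
      linarith [c2, c4, mul_pos hS0 hdL]
    have b3 : Real.exp ((2*S) * Real.log (d*L)) = (d*L) ^ (2*s) := by
      have : (2*S) * Real.log (d*L) = ((2*s : ℕ) : ℝ) * Real.log (d*L) := by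
        rw [← hSdef]; push_cast; ring
      rw [this, Real.exp_nat_mul, Real.exp_log hdL]
    calc ((E + 2*s).choose (2*s) : ℝ) ≤ (3 * ((E:ℝ) + 2*S) / (2*S)) ^ (2*s) := b1
      _ ≤ (d*L) ^ (2*s) := pow_le_pow_left₀ (by positivity) b2 _
      _ = Real.exp ((2*S) * Real.log (d*L)) := b3.symm
  have hT3 : N^k = Real.exp (k * L) := by
    rw [hNexp, ← Real.exp_nat_mul]
  have hK2 : 18 * S^2 / L^2 ≤ (k.choose 2 : ℝ) := by
    rw [Nat.cast_choose_two]
    have hx : (0:ℝ) ≤ 6 * S / L := by positivity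
    have hk1' : 6 * S / L ≤ (k:ℝ) - 1 := by linarith
    have hprod : (6 * S / L) * (6 * S / L) ≤ ((k:ℝ) - 1) * ((k:ℝ) - 1) :=
      mul_le_mul hk1' hk1' hx (by linarith)
    have hexp : (6 * S / L) * (6 * S / L) = 36 * S^2 / L^2 := by
      field_simp; ring
    have hexp2 : 18 * S^2/L^2 + 18 * S^2/L^2 = 36 * S^2/L^2 := by ring
    have hkk : ((k:ℝ) - 1) * ((k:ℝ) - 1) ≤ (k:ℝ) * ((k:ℝ) - 1) := by
      have hkge : (1:ℝ) ≤ (k:ℝ) := by linarith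
      have := mul_le_mul_of_nonneg_right hkge (by linarith : (0:ℝ) ≤ (k:ℝ) - 1)
      linarith
    linarith [hprod, hexp, hexp2, hkk]
  have hSK : S ≤ 18 * S^2 / L^2 := by
    rw [le_div_iff₀ (by positivity)]
    have hq : L^2 ≤ S / 3 := by linarith
    have := mul_le_mul_of_nonneg_left hq (le_of_lt hS0)
    linarith [sq_nonneg S]
  have hsK : s ≤ k.choose 2 := by
    have h : S ≤ (k.choose 2 : ℝ) := by linarith
    rw [← hSdef] at h
    exact_mod_cast h
  have hcand : Real.exp (S * Real.log (9 * S / L^2)) ≤ ((k.choose 2).choose s : ℝ) := by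
    have hcast : ((k.choose 2 + 1 - s : ℕ) : ℝ) = (k.choose 2 : ℝ) + 1 - S := by
      have hle : s ≤ k.choose 2 + 1 := by omega
      rw [← hSdef]
      push_cast [Nat.cast_sub hle]
      ring
    have hbase : 9 * S / L^2 ≤ ((k.choose 2 + 1 - s : ℕ) : ℝ) / S := by
      rw [hcast, le_div_iff₀ hS0]
      have h29 : 9 * S / L^2 * S = 9 * S^2 / L^2 := by field_simp
      rw [h29]
      have h31 : S ≤ 9 * S^2 / L^2 := by
        rw [le_div_iff₀ (by positivity)]
        have hq : L^2 ≤ S / 3 := by linarith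
        have := mul_le_mul_of_nonneg_left hq (le_of_lt hS0)
        linarith [sq_nonneg S]
      have h32 : 9 * S^2/L^2 + 9 * S^2/L^2 = 18 * S^2/L^2 := by ring
      linarith
    have hb0 : (0:ℝ) < 9 * S / L^2 := by positivity
    have hb0' : (0:ℝ) < 9 * (s:ℝ) / L^2 := by rw [hSdef]; exact hb0
    have heq : Real.exp (S * Real.log (9 * S / L^2)) = (9 * S / L^2) ^ s := by
      conv_lhs => rw [← hSdef]
      rw [Real.exp_nat_mul, Real.exp_log hb0', hSdef]
    rw [heq]
    calc (9 * S / L^2) ^ s ≤ (((k.choose 2 + 1 - s : ℕ) : ℝ) / S) ^ s :=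
          pow_le_pow_left₀ (le_of_lt hb0) hbase s
      _ = (((k.choose 2 + 1 - s : ℕ) : ℝ) / s) ^ s := by rw [← hSdef]
      _ ≤ ((k.choose 2).choose s : ℝ) := pow_div_le_choose _ s hs0
  calc ((E+n).choose n : ℝ) * ((E + 2*s).choose (2*s) : ℝ) * N^k
      ≤ Real.exp (N * Real.log (5*d)) * Real.exp ((2*S) * Real.log (d*L))
          * Real.exp (k * L) := by
        rw [hT3]
        apply mul_le_mul_of_nonneg_right _ (le_of_lt (Real.exp_pos _))
        exact mul_le_mul hT1 hT2 (by positivity) (le_of_lt (Real.exp_pos _))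
    _ = Real.exp (N * Real.log (5*d) + (2*S) * Real.log (d*L) + k * L) := by
        rw [← Real.exp_add, ← Real.exp_add]
    _ < Real.exp (S * Real.log (9 * S / L^2)) := Real.exp_lt_exp.mpr hscalar
    _ ≤ ((k.choose 2).choose s : ℝ) := hcand

lemma edgeSet_fromEdgeSet_nodiag {α : Type} (A : Finset (Sym2 α))
    (h : ∀ e ∈ A, ¬ e.IsDiag) :
    (SimpleGraph.fromEdgeSet (↑A : Set (Sym2 α))).edgeSet = ↑A := by
  rw [SimpleGraph.edgeSet_fromEdgeSet]
  ext e
  simp only [Set.mem_diff, Finset.mem_coe, Set.mem_setOf_eq]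
  exact ⟨fun he => he.1, fun he => ⟨he, h e he⟩⟩

lemma bot_not_minor {V : Type} [Fintype V] {k : ℕ} (G : SimpleGraph V)
    (hk : Fintype.card V < k) : ¬ IsMinor (⊥ : SimpleGraph (Fin k)) G := by
  rintro ⟨f, hdisj, hconn, -⟩
  have hne : ∀ h : Fin k, ∃ x, x ∈ f h := by
    intro h
    obtain ⟨⟨x, hx⟩⟩ := (hconn h).nonempty
    exact ⟨x, hx⟩
  choose lam hlam using hne
  have hinj : Function.Injective lam := by
    intro a b hab
    by_contra hne'
    exact Set.disjoint_left.mp (hdisj a b hne') (hlam a) (hab ▸ hlam b)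
  have := Fintype.card_le_of_injective lam hinj
  simp only [Fintype.card_fin] at this
  omega

set_option maxHeartbeats 2000000 in
/-- A graph on `n` vertices with average degree `d > 1` is not `m`-minor-universal for
`m = 6 n ln(d+2) / ln n`: there is a graph with at most `m` vertices and at most `m` edges
which is not a minor of `G`. -/
theorem not_minor_universal :
    ∃ n₀ : ℕ, ∀ (V : Type) [Fintype V] [DecidableEq V] (G : SimpleGraph V) [DecidableRel G.Adj]
      (d : ℝ),
      n₀ ≤ Fintype.card V → 1 < d →
      2 * (G.edgeFinset.card : ℝ) = d * Fintype.card V →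
      ∃ (k : ℕ) (H : SimpleGraph (Fin k)),
        (k : ℝ) ≤ 6 * (Fintype.card V : ℝ) * Real.log (d + 2) / Real.log (Fintype.card V) ∧
        (H.edgeSet.ncard : ℝ) ≤
          6 * (Fintype.card V : ℝ) * Real.log (d + 2) / Real.log (Fintype.card V) ∧
        ¬ IsMinor H G := by
  classical
  refine ⟨2^15000, ?_⟩
  intro V _ _ G _ d hn₀ hd hdeg
  obtain ⟨n, hn⟩ : ∃ x, Fintype.card V = x := ⟨_, rfl⟩
  rw [hn] at hn₀ hdeg ⊢
  obtain ⟨E, hEdef⟩ : ∃ x, G.edgeFinset.card = x := ⟨_, rfl⟩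
  rw [hEdef] at hdeg
  -- basic size facts
  have hnR : ((2:ℝ))^(15000:ℕ) ≤ (n:ℝ) := by exact_mod_cast hn₀
  have hn1 : (1:ℝ) ≤ (n:ℝ) := by
    have h0 : 0 < 2^15000 := Nat.pow_pos (by norm_num)
    have : 1 ≤ n := by omega
    exact_mod_cast this
  have hn0 : (0:ℝ) < (n:ℝ) := lt_of_lt_of_le one_pos hn1
  have hL : 10000 ≤ Real.log n := by
    have h2 : Real.log ((2:ℝ)^(15000:ℕ)) ≤ Real.log n :=
      Real.log_le_log (by positivity) hnR
    rw [Real.log_pow] at h2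
    have h3 := Real.log_two_gt_d9
    push_cast at h2
    linarith
  have hL0 : (0:ℝ) < Real.log n := by linarith
  have hlogd2 : (1:ℝ) < Real.log (d+2) := by
    have h5 : Real.log (Real.exp 1) < Real.log (d+2) := by
      apply Real.log_lt_log (Real.exp_pos 1)
      linarith [Real.exp_one_lt_d9]
    rwa [Real.log_exp] at h5
  have hM0 : (0:ℝ) < 6 * (n:ℝ) * Real.log (d+2) / Real.log n := by positivity
  obtain ⟨s, hsdef⟩ : ∃ x, ⌊6 * (n:ℝ) * Real.log (d+2) / Real.log n⌋₊ = x := ⟨_, rfl⟩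
  have hm1 : (s:ℝ) ≤ 6 * (n:ℝ) * Real.log (d+2) / Real.log n := by
    rw [← hsdef]; exact Nat.floor_le (le_of_lt hM0)
  have hm2 : 6 * (n:ℝ) * Real.log (d+2) / Real.log n < (s:ℝ) + 1 := by
    rw [← hsdef]; exact Nat.lt_floor_add_one _
  -- s is large
  have hsqn : Real.sqrt n * Real.sqrt n = (n:ℝ) := Real.mul_self_sqrt (by positivity)
  have hsq256 : (256:ℝ) ≤ Real.sqrt n := by
    have h6 : ((65536:ℝ)) ≤ (n:ℝ) := by
      calc (65536:ℝ) = 2^(16:ℕ) := by norm_num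
        _ ≤ 2^(15000:ℕ) := pow_le_pow_right₀ one_le_two (by norm_num)
        _ ≤ (n:ℝ) := hnR
    have := Real.sqrt_le_sqrt h6
    rwa [show (65536:ℝ) = 256^2 by norm_num, Real.sqrt_sq (by norm_num)] at this
  have hsqpos : (0:ℝ) < Real.sqrt n := by linarith
  have hn1N : 1 ≤ n := by
    have h0 : 0 < 2^15000 := Nat.pow_pos (by norm_num)
    omega
  clear hnR hn₀
  have hLsq : Real.log n ≤ 2 * Real.sqrt n := by
    have h7 : Real.log n = 2 * Real.log (Real.sqrt n) := by
      rw [Real.log_sqrt (by positivity)]; ring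
    have h8 : Real.log (Real.sqrt n) ≤ Real.sqrt n - 1 :=
      Real.log_le_sub_one_of_pos hsqpos
    linarith
  have hM3 : 3 * Real.sqrt n ≤ 6 * (n:ℝ) * Real.log (d+2) / Real.log n := by
    have h9 : 6 * (n:ℝ) ≤ 6 * (n:ℝ) * Real.log (d+2) := by nlinarith
    have h10 : 3 * Real.sqrt n * Real.log n ≤ 6 * (n:ℝ) := by nlinarith
    rw [le_div_iff₀ hL0]
    nlinarith
  have hs767 : (767:ℝ) ≤ (s:ℝ) := by nlinarith
  have hs0 : 0 < s := by
    by_contra h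
    push_neg at h
    interval_cases s
    norm_num at hs767
  by_cases hcase : s ≤ n
  · -- counting case
    obtain ⟨t, htdef⟩ : ∃ x, ⌊Real.log (n:ℝ)⌋₊ = x := ⟨_, rfl⟩
    have ht1 : (t:ℝ) ≤ Real.log n := by rw [← htdef]; exact Nat.floor_le (le_of_lt hL0)
    have ht2 : Real.log n - 1 < (t:ℝ) := by
      rw [← htdef]; linarith [Nat.lt_floor_add_one (Real.log (n:ℝ))]
    have ht3 : 10000 ≤ t := by
      rw [← htdef]
      exact Nat.le_floor (by exact_mod_cast hL)
    have ht0 : 0 < t := by omega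
    have ht0R : (0:ℝ) < (t:ℝ) := by exact_mod_cast ht0
    obtain ⟨k, hkdef⟩ : ∃ x, 6 * (s / t) + 7 = x := ⟨_, rfl⟩
    have hdiv1 : s + 1 ≤ t * (s / t) + t ∨ s < t := by
      rcases Nat.lt_or_ge s t with h | h
      · exact Or.inr h
      · left
        have := Nat.div_add_mod s t
        have := Nat.mod_lt s ht0
        omega
    have hq1 : (s:ℝ) / Real.log n - 1 ≤ ((s / t : ℕ) : ℝ) := by
      rcases hdiv1 with h | h
      · have hcast : (s:ℝ) + 1 ≤ (t:ℝ) * ((s/t : ℕ):ℝ) + t := by exact_mod_cast h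
        have hq2 : (s:ℝ)/(t:ℝ) - 1 ≤ ((s/t : ℕ):ℝ) := by
          rw [sub_le_iff_le_add, div_le_iff₀ ht0R]
          nlinarith
        have hq3 : (s:ℝ)/Real.log n ≤ (s:ℝ)/(t:ℝ) :=
          div_le_div_of_nonneg_left (by positivity) ht0R ht1
        linarith
      · have h14 : (s:ℝ) < (t:ℝ) := by exact_mod_cast h
        have hq4 : (s:ℝ)/Real.log n ≤ 1 := by
          rw [div_le_one hL0]; linarith
        have : (0:ℝ) ≤ ((s/t : ℕ):ℝ) := by positivity
        linarith
    have hkcast : (k:ℝ) = 6 * ((s/t : ℕ):ℝ) + 7 := by rw [← hkdef]; push_cast; ring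
    have hk1 : 6 * (s:ℝ) / Real.log n + 1 ≤ (k:ℝ) := by
      rw [hkcast]
      have expand : 6 * (s:ℝ) / Real.log n = 6 * ((s:ℝ)/Real.log n) := by ring
      rw [expand]
      linarith
    have hk2 : (k:ℝ) ≤ 6 * (s:ℝ) / (Real.log n - 1) + 7 := by
      have hq5 : ((s/t : ℕ):ℝ) ≤ (s:ℝ)/(t:ℝ) := Nat.cast_div_le
      have hq6 : (s:ℝ)/(t:ℝ) ≤ (s:ℝ)/(Real.log n - 1) :=
        div_le_div_of_nonneg_left (by positivity) (by linarith) (by linarith)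
      rw [hkcast]
      have expand : 6 * (s:ℝ) / (Real.log n - 1) = 6 * ((s:ℝ)/(Real.log n - 1)) := by ring
      rw [expand]
      linarith
    have hks : (k:ℝ) ≤ (s:ℝ) := by
      have h12 : (s:ℝ)/(Real.log n - 1) ≤ (s:ℝ)/9999 :=
        div_le_div_of_nonneg_left (by positivity) (by norm_num) (by linarith)
      have h12b : 6 * (s:ℝ) / (Real.log n - 1) = 6 * ((s:ℝ)/(Real.log n - 1)) := by ring
      have h12c : (k:ℝ) ≤ 6 * ((s:ℝ)/9999) + 7 := by
        rw [h12b] at hk2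
        linarith
      have h12d : (s:ℝ)/9999 = (s:ℝ) * (1/9999) := by ring
      rw [h12d] at h12c
      linarith
    by_cases hex : ∃ A ∈ Finset.powersetCard s (⊤ : SimpleGraph (Fin k)).edgeFinset,
        ¬ IsMinor (SimpleGraph.fromEdgeSet (↑A : Set (Sym2 (Fin k)))) G
    · obtain ⟨A, hAmem, hAnm⟩ := hex
      obtain ⟨hAsub, hAcard⟩ := Finset.mem_powersetCard.mp hAmem
      have hAdiag : ∀ e ∈ A, ¬ e.IsDiag := by
        intro e he
        have h13 := hAsub he
        rw [SimpleGraph.mem_edgeFinset, SimpleGraph.edgeSet_top] at h13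
        exact h13
      refine ⟨k, SimpleGraph.fromEdgeSet (↑A : Set (Sym2 (Fin k))), ?_, ?_, hAnm⟩
      · linarith
      · rw [edgeSet_fromEdgeSet_nodiag A hAdiag, Set.ncard_coe_finset, hAcard]
        exact hm1
    · push_neg at hex
      exfalso
      haveI hVne : Nonempty V := by
        apply Fintype.card_pos_iff.mp
        rw [hn]
        omega
      have key : ∀ A : Finset (Sym2 (Fin k)),
          ∃ enc : Finset (Sym2 V) × Finset (Sym2 V) × (Fin k → V),
          A ∈ Finset.powersetCard s (⊤ : SimpleGraph (Fin k)).edgeFinset →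
          (enc.1 ∈ G.edgeFinset.powerset.filter (fun F => F.card ≤ n) ∧
           enc.2.1 ∈ G.edgeFinset.powerset.filter (fun C => C.card ≤ 2*s) ∧
           ∀ h h' : Fin k, ((SimpleGraph.fromEdgeSet (↑A : Set (Sym2 (Fin k)))).Adj h h' ↔
             ∃ u v : V, s(u,v) ∈ enc.2.1 ∧
               (SimpleGraph.fromEdgeSet (↑enc.1 : Set (Sym2 V))).Reachable (enc.2.2 h) u ∧
               (SimpleGraph.fromEdgeSet (↑enc.1 : Set (Sym2 V))).Reachable (enc.2.2 h') v)) := by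
        intro A
        by_cases hA : A ∈ Finset.powersetCard s (⊤ : SimpleGraph (Fin k)).edgeFinset
        · obtain ⟨hAsub, hAcard⟩ := Finset.mem_powersetCard.mp hA
          have hAdiag : ∀ e ∈ A, ¬ e.IsDiag := by
            intro e he
            have h13 := hAsub he
            rw [SimpleGraph.mem_edgeFinset, SimpleGraph.edgeSet_top] at h13
            exact h13
          have hmin := hex A hA
          obtain ⟨F, C, lam, hFsub, hFcard, hCsub, hCcard, hdec⟩ :=
            exists_encoding G (SimpleGraph.fromEdgeSet (↑A : Set (Sym2 (Fin k)))) hmin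
          refine ⟨(F, C, lam), fun _ => ⟨?_, ?_, hdec⟩⟩
          · rw [Finset.mem_filter, Finset.mem_powerset]
            constructor
            · intro e he
              rw [SimpleGraph.mem_edgeFinset]
              exact hFsub he
            · rw [hn] at hFcard
              exact hFcard
          · rw [Finset.mem_filter, Finset.mem_powerset]
            constructor
            · intro e he
              rw [SimpleGraph.mem_edgeFinset]
              exact hCsub he
            · rw [edgeSet_fromEdgeSet_nodiag A hAdiag, Set.ncard_coe_finset, hAcard] at hCcard
              exact hCcard
        · exact ⟨(∅, ∅, fun _ => Classical.arbitrary V), fun h => absurd h hA⟩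
      choose Φ hΦ using key
      have hmapsto : ∀ A ∈ Finset.powersetCard s (⊤ : SimpleGraph (Fin k)).edgeFinset,
          Φ A ∈ (G.edgeFinset.powerset.filter (fun F => F.card ≤ n)) ×ˢ
            ((G.edgeFinset.powerset.filter (fun C => C.card ≤ 2*s)) ×ˢ
              (Finset.univ : Finset (Fin k → V))) := by
        intro A hA
        obtain ⟨m1, m2, _⟩ := hΦ A hA
        rw [Finset.mem_product, Finset.mem_product]
        exact ⟨m1, m2, Finset.mem_univ _⟩
      have hinj : Set.InjOn Φ ↑(Finset.powersetCard s (⊤ : SimpleGraph (Fin k)).edgeFinset) := by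
        intro A₁ h₁ A₂ h₂ heq
        rw [Finset.mem_coe] at h₁ h₂
        have d₁ := (hΦ A₁ h₁).2.2
        have d₂ := (hΦ A₂ h₂).2.2
        rw [heq] at d₁
        have hgr : SimpleGraph.fromEdgeSet (↑A₁ : Set (Sym2 (Fin k))) =
            SimpleGraph.fromEdgeSet (↑A₂ : Set (Sym2 (Fin k))) := by
          ext h h'
          rw [d₁ h h', d₂ h h']
        have hd₁ : ∀ e ∈ A₁, ¬e.IsDiag := by
          intro e he
          have h13 := (Finset.mem_powersetCard.mp h₁).1 he
          rw [SimpleGraph.mem_edgeFinset, SimpleGraph.edgeSet_top] at h13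
          exact h13
        have hd₂ : ∀ e ∈ A₂, ¬e.IsDiag := by
          intro e he
          have h13 := (Finset.mem_powersetCard.mp h₂).1 he
          rw [SimpleGraph.mem_edgeFinset, SimpleGraph.edgeSet_top] at h13
          exact h13
        apply Finset.coe_injective
        rw [← edgeSet_fromEdgeSet_nodiag A₁ hd₁, ← edgeSet_fromEdgeSet_nodiag A₂ hd₂, hgr]
      have hc1 : (k.choose 2).choose s ≤
          ((G.edgeFinset.powerset.filter (fun F => F.card ≤ n)) ×ˢ
            ((G.edgeFinset.powerset.filter (fun C => C.card ≤ 2*s)) ×ˢ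
              (Finset.univ : Finset (Fin k → V)))).card := by
        calc (k.choose 2).choose s
            = (Finset.powersetCard s (⊤ : SimpleGraph (Fin k)).edgeFinset).card := by
              rw [Finset.card_powersetCard,
                SimpleGraph.card_edgeFinset_top_eq_card_choose_two, Fintype.card_fin]
          _ ≤ _ := Finset.card_le_card_of_injOn Φ hmapsto hinj
      have hc2 : ((G.edgeFinset.powerset.filter (fun F => F.card ≤ n)) ×ˢ
            ((G.edgeFinset.powerset.filter (fun C => C.card ≤ 2*s)) ×ˢ
              (Finset.univ : Finset (Fin k → V)))).card
          = (G.edgeFinset.powerset.filter (fun F => F.card ≤ n)).card *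
            ((G.edgeFinset.powerset.filter (fun C => C.card ≤ 2*s)).card * n ^ k) := by
        rw [Finset.card_product, Finset.card_product, Finset.card_univ, Fintype.card_fun,
          Fintype.card_fin, hn]
      have hc3 : (G.edgeFinset.powerset.filter (fun F => F.card ≤ n)).card ≤ (E+n).choose n := by
        calc (G.edgeFinset.powerset.filter (fun F => F.card ≤ n)).card
            ≤ ((range (n+1)).biUnion (fun i => Finset.powersetCard i G.edgeFinset)).card := by
              apply Finset.card_le_card
              intro F hF
              rw [Finset.mem_filter, Finset.mem_powerset] at hF
              rw [Finset.mem_biUnion]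
              exact ⟨F.card, Finset.mem_range.mpr (by omega),
                Finset.mem_powersetCard.mpr ⟨hF.1, rfl⟩⟩
          _ ≤ ∑ i ∈ range (n+1), (Finset.powersetCard i G.edgeFinset).card :=
              Finset.card_biUnion_le
          _ = ∑ i ∈ range (n+1), E.choose i := by
              apply Finset.sum_congr rfl
              intro i _
              rw [Finset.card_powersetCard, hEdef]
          _ ≤ (E+n).choose n := sum_choose_le_choose_add E n
      have hc4 : (G.edgeFinset.powerset.filter (fun C => C.card ≤ 2*s)).card
          ≤ (E+2*s).choose (2*s) := by
        calc (G.edgeFinset.powerset.filter (fun C => C.card ≤ 2*s)).card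
            ≤ ((range (2*s+1)).biUnion (fun i => Finset.powersetCard i G.edgeFinset)).card := by
              apply Finset.card_le_card
              intro F hF
              rw [Finset.mem_filter, Finset.mem_powerset] at hF
              rw [Finset.mem_biUnion]
              exact ⟨F.card, Finset.mem_range.mpr (by omega),
                Finset.mem_powersetCard.mpr ⟨hF.1, rfl⟩⟩
          _ ≤ ∑ i ∈ range (2*s+1), (Finset.powersetCard i G.edgeFinset).card :=
              Finset.card_biUnion_le
          _ = ∑ i ∈ range (2*s+1), E.choose i := by
              apply Finset.sum_congr rfl
              intro i _
              rw [Finset.card_powersetCard, hEdef]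
          _ ≤ (E+2*s).choose (2*s) := sum_choose_le_choose_add E (2*s)
      have hnum := counting_numeric n E s k d hd hdeg hL hm1 hm2 hcase hk1 hk2
      have hchain : (k.choose 2).choose s ≤
          (E+n).choose n * ((E+2*s).choose (2*s) * n^k) := by
        calc (k.choose 2).choose s ≤ _ := hc1
          _ = _ := hc2
          _ ≤ (E+n).choose n * ((E+2*s).choose (2*s) * n^k) :=
              Nat.mul_le_mul hc3 (Nat.mul_le_mul_right _ hc4)
      have hfinal : ((k.choose 2).choose s : ℝ) ≤
          ((E+n).choose n : ℝ) * ((E + 2*s).choose (2*s) : ℝ) * (n:ℝ)^k := by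
        calc ((k.choose 2).choose s : ℝ)
            ≤ (((E+n).choose n * ((E+2*s).choose (2*s) * n^k) : ℕ) : ℝ) := by
              exact_mod_cast hchain
          _ = _ := by push_cast; ring
      linarith
  · -- pigeonhole case
    push_neg at hcase
    refine ⟨n+1, ⊥, ?_, ?_, bot_not_minor G (by rw [hn]; omega)⟩
    · have h15 : ((n+1:ℕ):ℝ) ≤ (s:ℝ) := by exact_mod_cast hcase
      exact le_trans h15 hm1
    · rw [SimpleGraph.edgeSet_bot, Set.ncard_empty]
      push_cast
      linarith
end

section
/- Let G be a graph on n vertices, let 0 < α < 1 and t ≥ 1, and suppose that |N(S)| ≥ t|S| for every S ⊆ V(G) with αn/(2t) ≤ |S| ≤ αn/t. Then there exists X ⊆ V(G) with |X| ≥ n − αn/t such that the induced subgraph G[X] is an (α/4, t/2)-expander. -/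
open Finset

/-- The external neighbourhood of a vertex set `X` in a graph `G`:
`N(X) = {v ∉ X : ∃ x ∈ X, {v,x} ∈ E(G)}`. -/
def extNbhd {V : Type} [Fintype V] [DecidableEq V] (G : SimpleGraph V) [DecidableRel G.Adj]
    (X : Finset V) : Finset V :=
  Finset.univ.filter fun v => v ∉ X ∧ ∃ x ∈ X, G.Adj v x

/-- The induced subgraph `G[X]` is an `(α, t)`-expander: every `S ⊆ X` with
`|S| ≤ α |X| / t` satisfies `|N_G(S) ∩ X| ≥ t |S|` (the external neighbourhood of `S` in
`G[X]` being `N_G(S) ∩ X`). -/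
def IsExpanderOn {V : Type} [Fintype V] [DecidableEq V] (G : SimpleGraph V)
    [DecidableRel G.Adj] (X : Finset V) (α t : ℝ) : Prop :=
  ∀ S ⊆ X, (S.card : ℝ) ≤ α * X.card / t →
    t * S.card ≤ (((extNbhd G S) ∩ X).card : ℝ)

lemma extNbhd_union_subset {V : Type} [Fintype V] [DecidableEq V] (G : SimpleGraph V)
    [DecidableRel G.Adj] (B S : Finset V) :
    extNbhd G (B ∪ S) ⊆ (extNbhd G B \ S) ∪ (extNbhd G S ∩ (Finset.univ \ B)) := by
  intro v hv
  simp only [extNbhd, mem_filter, mem_univ, true_and, mem_union, mem_sdiff, mem_inter,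
    not_or] at hv ⊢
  obtain ⟨⟨hvB, hvS⟩, x, hx, hadj⟩ := hv
  rcases hx with hxB | hxS
  · exact Or.inl ⟨⟨hvB, x, hxB, hadj⟩, hvS⟩
  · exact Or.inr ⟨⟨hvS, x, hxS, hadj⟩, hvB⟩

/-- If every `S` with `α n / (2t) ≤ |S| ≤ α n / t` satisfies `|N(S)| ≥ t |S|`, then there is
`X` of size at least `n - α n / t` such that `G[X]` is an `(α/4, t/2)`-expander. -/
theorem expander_from_medium_sets {V : Type} [Fintype V] [DecidableEq V]
    (G : SimpleGraph V) [DecidableRel G.Adj] (α t : ℝ)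
    (hα0 : 0 < α) (hα1 : α < 1) (ht : 1 ≤ t)
    (hG : ∀ S : Finset V,
      α * (Fintype.card V : ℝ) / (2 * t) ≤ S.card →
      (S.card : ℝ) ≤ α * (Fintype.card V : ℝ) / t →
      t * S.card ≤ ((extNbhd G S).card : ℝ)) :
    ∃ X : Finset V,
      (Fintype.card V : ℝ) - α * (Fintype.card V : ℝ) / t ≤ X.card ∧
      IsExpanderOn G X (α / 4) (t / 2) := by
  classical
  set n : ℝ := (Fintype.card V : ℝ) with hn
  have hn0 : 0 ≤ n := Nat.cast_nonneg _
  have ht0 : (0:ℝ) < t := lt_of_lt_of_le one_pos ht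
  set P : Finset V → Prop := fun B =>
    (B.card : ℝ) ≤ α * n / t ∧ ((extNbhd G B).card : ℝ) ≤ (t/2) * B.card with hP
  have hPempty : P ∅ := by
    constructor
    · simp only [card_empty, Nat.cast_zero]
      positivity
    · simp [extNbhd]
  -- choose a maximal B satisfying P
  obtain ⟨B, hBmem, hmax⟩ :=
    Finset.exists_max_image (Finset.univ.filter P) (fun B => B.card)
      ⟨∅, mem_filter.mpr ⟨mem_univ _, hPempty⟩⟩
  have hPB : P B := (mem_filter.mp hBmem).2
  have hmax' : ∀ B', P B' → B'.card ≤ B.card := fun B' h =>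
    hmax B' (mem_filter.mpr ⟨mem_univ _, h⟩)
  -- B is small
  have hBsmall : (B.card : ℝ) ≤ α * n / (2 * t) := by
    by_contra h
    push_neg at h
    have h1 := hG B h.le hPB.1
    have h2 := hPB.2
    have h3 : α * n / (2 * t) ≥ 0 := by positivity
    nlinarith [Nat.cast_nonneg (α := ℝ) B.card]
  refine ⟨Finset.univ \ B, ?_, ?_⟩
  · have hcard : ((Finset.univ \ B : Finset V).card : ℝ) = n - B.card := by
      rw [card_sdiff_of_subset (subset_univ B), Nat.cast_sub (card_le_card (subset_univ B))]
      simp [hn, card_univ]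
    rw [hcard]
    have : α * n / (2 * t) ≤ α * n / t := by
      apply div_le_div_of_nonneg_left (by positivity) ht0
      linarith
    linarith
  · intro S hS hScard
    set X : Finset V := Finset.univ \ B with hX
    have hXn : (X.card : ℝ) ≤ n := by exact_mod_cast Nat.cast_le.mpr (card_le_univ X)
    have hScard' : (S.card : ℝ) ≤ α * n / (2 * t) := by
      have heq : α / 4 * (X.card:ℝ) / (t / 2) = α * X.card / (2 * t) := by
        field_simp
        ring
      have : (S.card : ℝ) ≤ α * X.card / (2 * t) := by
        rw [heq] at hScard
        exact hScard
      calc (S.card : ℝ) ≤ α * X.card / (2 * t) := this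
        _ ≤ α * n / (2 * t) := by
          apply div_le_div_of_nonneg_right _ (by positivity)
          nlinarith
    by_contra hbad
    push_neg at hbad
    -- B ∪ S satisfies P and is bigger, contradiction
    have hdisj : Disjoint S B := by
      intro A hAS hAB
      intro a ha
      have := hAS ha
      have h2 := hS this
      rw [hX, mem_sdiff] at h2
      exact absurd (hAB ha) h2.2
    have hcardU : ((B ∪ S).card : ℝ) = B.card + S.card := by
      rw [card_union_of_disjoint hdisj.symm]
      push_cast; ring
    have hPU : P (B ∪ S) := by
      constructor
      · rw [hcardU]
        have : α * n / (2 * t) + α * n / (2 * t) = α * n / t := by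
          field_simp; ring
        linarith
      · have hsub := extNbhd_union_subset G B S
        have h1 : ((extNbhd G (B ∪ S)).card : ℝ)
            ≤ ((extNbhd G B \ S).card : ℝ) + ((extNbhd G S ∩ X).card : ℝ) := by
          calc ((extNbhd G (B ∪ S)).card : ℝ)
              ≤ (((extNbhd G B \ S) ∪ (extNbhd G S ∩ (Finset.univ \ B))).card : ℝ) := by
                exact_mod_cast Nat.cast_le.mpr (card_le_card hsub)
            _ ≤ ((extNbhd G B \ S).card : ℝ) + ((extNbhd G S ∩ X).card : ℝ) := by
                rw [hX]
                exact_mod_cast Nat.cast_le.mpr (card_union_le _ _)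
        have h2 : ((extNbhd G B \ S).card : ℝ) ≤ ((extNbhd G B).card : ℝ) :=
          Nat.cast_le.mpr (card_le_card (sdiff_subset))
        have h3 := hPB.2
        rw [hcardU]
        nlinarith
    have := hmax' (B ∪ S) hPU
    have hle : (B ∪ S).card = B.card + S.card := card_union_of_disjoint hdisj.symm
    have hS0 : S.card = 0 := by omega
    have : (0:ℝ) ≤ (((extNbhd G S) ∩ X).card : ℝ) := Nat.cast_nonneg _
    rw [hS0] at hbad
    simp at hbad
    nlinarith
end

section
/- Let G be an n-vertex d-regular graph whose adjacency matrix has all eigenvalues other than the largest one of absolute value at most λ, where λ < d/4. Then G is a (1/4, d²/(16λ²))-expander: every vertex set X ⊆ V(G) with |X| ≤ n·(16λ²)/(4d²) satisfies |N(X)| ≥ (d²/(16λ²))·|X|. -/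
open Finset

/-- `G` is an `(α, t)`-expander: every set `X` of at most `α n / t` vertices satisfies
`|N(X)| ≥ t |X|`. -/
def IsExpander {V : Type} [Fintype V] [DecidableEq V] (G : SimpleGraph V) [DecidableRel G.Adj]
    (α t : ℝ) : Prop :=
  ∀ X : Finset V, (X.card : ℝ) ≤ α * (Fintype.card V) / t →
    t * X.card ≤ ((extNbhd G X).card : ℝ)

open Matrix

lemma mixing {V : Type} [Fintype V] [DecidableEq V]
    (A : Matrix V V ℝ) (hA : A.IsHermitian) (d lam : ℝ) (i₀ : V)
    (hd : A *ᵥ (fun _ => (1:ℝ)) = d • (fun _ => (1:ℝ)))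
    (hi₀ : hA.eigenvalues i₀ = d)
    (hne : ∀ j, j ≠ i₀ → hA.eigenvalues j ≠ d)
    (hlamb : ∀ j, j ≠ i₀ → |hA.eigenvalues j| ≤ lam)
    (hlam0 : 0 ≤ lam) (f g : V → ℝ) :
    f ⬝ᵥ (A *ᵥ g) ≤ d / (Fintype.card V) * ((∑ v, f v) * (∑ v, g v))
      + lam * (Real.sqrt (∑ v, f v ^ 2) * Real.sqrt (∑ v, g v ^ 2)) := by
  classical
  set U : Matrix V V ℝ := (hA.eigenvectorUnitary : Matrix V V ℝ) with hU
  set μ : V → ℝ := hA.eigenvalues with hμ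
  have hUmem := hA.eigenvectorUnitary.2
  have h1 : star U * U = 1 := hUmem.1
  have h2 : U * star U = 1 := hUmem.2
  have hstarU : ∀ j v, star U j v = U v j := by
    intro j v
    simp [Matrix.star_apply]
  -- row orthonormality
  have horthR : ∀ u v, (∑ j, U u j * U v j) = if u = v then (1:ℝ) else 0 := by
    intro u v
    have := congrFun (congrFun h2 u) v
    simpa [Matrix.mul_apply, Matrix.one_apply, hstarU] using this
  -- column orthonormality
  have horthC : ∀ j k, (∑ v, U v j * U v k) = if j = k then (1:ℝ) else 0 := by
    intro j k
    have := congrFun (congrFun h1 j) k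
    simpa [Matrix.mul_apply, Matrix.one_apply, hstarU] using this
  set c : V → ℝ := f ᵥ* U with hc
  set e : V → ℝ := g ᵥ* U with he
  have hstarmul : ∀ x : V → ℝ, star U *ᵥ x = x ᵥ* U := by
    intro x
    ext j
    simp [Matrix.mulVec, Matrix.vecMul, dotProduct, hstarU, mul_comm]
  -- the main spectral identity
  have key : f ⬝ᵥ (A *ᵥ g) = ∑ j, μ j * (c j * e j) := by
    conv_lhs => rw [hA.spectral_theorem, Unitary.conjStarAlgAut_apply]
    rw [← Matrix.mulVec_mulVec, ← Matrix.mulVec_mulVec, Matrix.dotProduct_mulVec, hstarmul, ← he,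
      ← hc]
    simp [dotProduct, Matrix.mulVec_diagonal, hμ]
    exact Finset.sum_congr rfl fun x _ => by ring
  -- Parseval for f
  have parseval : ∀ x : V → ℝ, (∑ j, (x ᵥ* U) j ^ 2) = ∑ v, x v ^ 2 := by
    intro x
    have : (x ᵥ* U) ⬝ᵥ (x ᵥ* U) = x ⬝ᵥ x := by
      conv_lhs => rw [← Matrix.dotProduct_mulVec]
      rw [← hstarmul x, Matrix.mulVec_mulVec, h2, Matrix.one_mulVec]
    simpa [dotProduct, sq] using this
  -- a j = column sums
  set a : V → ℝ := fun j => ∑ v, U v j with ha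
  have haj : ∀ j, j ≠ i₀ → a j = 0 := by
    intro j hj
    have hBj : A *ᵥ (fun v => U v j) = μ j • (fun v => U v j) := by
      have := hA.mulVec_eigenvectorBasis j
      convert this using 2
      all_goals (ext v; simp [hU])
    have hAsymm : Aᵀ = A := by
      have := hA
      rw [Matrix.IsHermitian] at this
      simpa [Matrix.conjTranspose, Matrix.map, Matrix.transpose] using this
    have e1 : (fun v => U v j) ⬝ᵥ (A *ᵥ (fun _ => (1:ℝ))) = d * a j := by
      rw [hd]
      simp [dotProduct, ha, mul_comm, Finset.mul_sum]
    have e2 : (fun v => U v j) ⬝ᵥ (A *ᵥ (fun _ => (1:ℝ))) = μ j * a j := by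
      rw [Matrix.dotProduct_mulVec]
      have : (fun v => U v j) ᵥ* A = μ j • (fun v => U v j) := by
        rw [← hAsymm, Matrix.vecMul_transpose, hBj]
      rw [this]
      simp [dotProduct, ha, Finset.mul_sum]
    have hμd : μ j ≠ d := hne j hj
    have := e1.symm.trans e2
    rcases mul_eq_mul_right_iff.mp (by linarith [this] : μ j * a j = d * a j) with h | h
    · exact absurd h hμd
    · exact h
  have hone : ∀ v, a i₀ * U v i₀ = 1 := by
    intro v
    have hsum : (∑ j, a j * U v j) = 1 := by
      have : (∑ j, a j * U v j) = ∑ u, ∑ j, U u j * U v j := by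
        rw [Finset.sum_comm]
        simp [ha, Finset.sum_mul]
      rw [this]
      simp [horthR]
    rw [← hsum]
    rw [Finset.sum_eq_single i₀]
    · intro j _ hj; rw [haj j hj]; ring
    · intro h; exact absurd (Finset.mem_univ i₀) h
  have hcardpos : (0:ℝ) < Fintype.card V := by
    have : Nonempty V := ⟨i₀⟩
    exact_mod_cast Fintype.card_pos
  have ha2 : a i₀ ^ 2 = (Fintype.card V : ℝ) := by
    have hcol := horthC i₀ i₀
    simp only [if_pos rfl] at hcol
    have : (Fintype.card V : ℝ) = ∑ v : V, (a i₀ * U v i₀) * (a i₀ * U v i₀) := by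
      simp [hone]
    rw [this]
    have : ∑ v : V, (a i₀ * U v i₀) * (a i₀ * U v i₀) = a i₀ ^ 2 * ∑ v, U v i₀ * U v i₀ := by
      rw [Finset.mul_sum]; congr 1; ext v; ring
    rw [this]
    rw [show ∑ v, U v i₀ * U v i₀ = (1:ℝ) from hcol]
    ring
  have ha0 : a i₀ ≠ 0 := by
    intro h
    rw [h] at ha2
    simp at ha2
    linarith [ha2 ▸ hcardpos]
  have hcf : a i₀ * c i₀ = ∑ v, f v := by
    have : ∑ v, f v = ∑ v, (a i₀ * U v i₀) * f v := by
      simp [hone]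
    rw [this, hc]
    simp [Matrix.vecMul, dotProduct, Finset.mul_sum]
    congr 1; ext v; ring
  have hcg : a i₀ * e i₀ = ∑ v, g v := by
    have : ∑ v, g v = ∑ v, (a i₀ * U v i₀) * g v := by
      simp [hone]
    rw [this, he]
    simp [Matrix.vecMul, dotProduct, Finset.mul_sum]
    congr 1; ext v; ring
  -- split the sum
  have hsplit : ∑ j, μ j * (c j * e j)
      = μ i₀ * (c i₀ * e i₀) + ∑ j ∈ Finset.univ.erase i₀, μ j * (c j * e j) := by
    rw [← Finset.add_sum_erase _ _ (Finset.mem_univ i₀)]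
  -- main term
  have hmain : μ i₀ * (c i₀ * e i₀) = d / (Fintype.card V) * ((∑ v, f v) * (∑ v, g v)) := by
    rw [hi₀, ← hcf, ← hcg, ← ha2]
    field_simp
  -- error term
  have herr : ∑ j ∈ Finset.univ.erase i₀, μ j * (c j * e j)
      ≤ lam * (Real.sqrt (∑ v, f v ^ 2) * Real.sqrt (∑ v, g v ^ 2)) := by
    calc ∑ j ∈ Finset.univ.erase i₀, μ j * (c j * e j)
        ≤ ∑ j ∈ Finset.univ.erase i₀, lam * (|c j| * |e j|) := by
          apply Finset.sum_le_sum
          intro j hj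
          have hj' : j ≠ i₀ := (Finset.mem_erase.mp hj).1
          have h1 : μ j * (c j * e j) ≤ |μ j * (c j * e j)| := le_abs_self _
          have h2 : |μ j * (c j * e j)| = |μ j| * (|c j| * |e j|) := by
            rw [abs_mul, abs_mul]
          rw [h2] at h1
          refine h1.trans ?_
          apply mul_le_mul_of_nonneg_right (hlamb j hj') (by positivity)
      _ ≤ ∑ j, lam * (|c j| * |e j|) := by
          apply Finset.sum_le_sum_of_subset_of_nonneg (Finset.erase_subset _ _)
          intro j _ _; positivity
      _ = lam * ∑ j, |c j| * |e j| := by rw [Finset.mul_sum]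
      _ ≤ lam * (Real.sqrt (∑ j, |c j| ^ 2) * Real.sqrt (∑ j, |e j| ^ 2)) := by
          apply mul_le_mul_of_nonneg_left _ hlam0
          exact Real.sum_mul_le_sqrt_mul_sqrt _ _ _
      _ = lam * (Real.sqrt (∑ v, f v ^ 2) * Real.sqrt (∑ v, g v ^ 2)) := by
          simp only [sq_abs]
          rw [hc, he, parseval f, parseval g]
  rw [key, hsplit, hmain]
  linarith [herr]


lemma endgame (D L T n x y s r p : ℝ)
    (hL : 0 < L) (hld : 4 * L < D)
    (hTval : T * (16 * L ^ 2) = D ^ 2)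
    (hnpos : 0 < n) (hx0 : 0 ≤ x) (hy0 : 0 ≤ y)
    (hr0 : 0 ≤ r) (hp0 : 0 ≤ p) (hr2 : r ^ 2 = x) (hp2 : p ^ 2 = s)
    (hsSum : s = x + y) (hcon : y < T * x) (hX : x ≤ 1 / 4 * n / T)
    (hmix : D * x ≤ D / n * (x * s) + L * (r * p)) : False := by
  have hD : 0 < D := by linarith
  have hL2 : (0:ℝ) < 16 * L ^ 2 := by positivity
  have hT1 : 1 ≤ T := by
    rw [← mul_le_mul_iff_left₀ hL2, one_mul, hTval]
    nlinarith [sq_nonneg (D - 4 * L), mul_lt_mul_of_pos_left hld hL]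
  have hTpos : 0 < T := lt_of_lt_of_le zero_lt_one hT1
  have hs0 : 0 ≤ s := by linarith
  have hxpos : 0 < x := by
    by_contra h
    push_neg at h
    have : T * x ≤ 0 := mul_nonpos_of_nonneg_of_nonpos hTpos.le h
    linarith
  have hsle : s ≤ 2 * T * x := by
    have h1x := mul_le_mul_of_nonneg_right hT1 hx0
    rw [one_mul] at h1x
    linarith
  have hxn : 4 * (T * x) ≤ n := by
    have h := (le_div_iff₀ hTpos).mp hX
    linarith
  have h3 : D / n * (x * s) ≤ D * x / 2 := by
    have hxs : x * s ≤ n * x / 2 := by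
      have k1 := mul_le_mul_of_nonneg_left hsle hx0
      have k2 := mul_le_mul_of_nonneg_left hxn hx0
      nlinarith [k1, k2]
    calc D / n * (x * s) ≤ D / n * (n * x / 2) :=
          mul_le_mul_of_nonneg_left hxs (by positivity)
      _ = D * x / 2 := by field_simp
  have h4 : L * (r * p) ≤ 3 / 8 * (D * x) := by
    have hsq : (L * (r * p)) ^ 2 ≤ 1 / 8 * (D * x) ^ 2 := by
      have e1 : (L * (r * p)) ^ 2 = L ^ 2 * (x * s) := by rw [mul_pow, mul_pow, hr2, hp2]
      rw [e1]
      have key1 : L ^ 2 * x * s ≤ L ^ 2 * x * (2 * T * x) :=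
        mul_le_mul_of_nonneg_left hsle (by positivity)
      have key2 : (T * (16 * L ^ 2)) * x ^ 2 = D ^ 2 * x ^ 2 := by rw [hTval]
      nlinarith [key1, key2]
    nlinarith [hsq, mul_nonneg (mul_nonneg hL.le hr0) hp0, mul_pos hD hxpos]
  nlinarith [hmix, h3, h4, mul_pos hD hxpos]

set_option maxHeartbeats 1000000 in
/-- An `(n, d, λ)`-graph with `λ < d/4` is a `(1/4, d²/(16λ²))`-expander. -/
theorem ndl_expander {V : Type} [Fintype V] [DecidableEq V]
    (G : SimpleGraph V) [DecidableRel G.Adj] (d : ℕ) (lam : ℝ)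
    (hreg : G.IsRegularOfDegree d)
    (hA : (G.adjMatrix ℝ).IsHermitian)
    (i₀ : V) (hi₀ : hA.eigenvalues i₀ = d)
    (hlam : ∀ i ≠ i₀, |hA.eigenvalues i| ≤ lam)
    (hld : lam < (d : ℝ) / 4) :
    IsExpander G (1 / 4) ((d : ℝ) ^ 2 / (16 * lam ^ 2)) := by
  classical
  intro X hX
  set T : ℝ := (d : ℝ) ^ 2 / (16 * lam ^ 2) with hT
  by_cases htriv : T = 0
  · rw [htriv, zero_mul]
    positivity
  -- nontrivial case
  have hd0 : d ≠ 0 := by rintro rfl; simp [hT] at htriv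
  have hL0 : lam ≠ 0 := by rintro rfl; simp [hT] at htriv
  have hD1 : (1 : ℝ) ≤ (d : ℝ) := by exact_mod_cast Nat.one_le_iff_ne_zero.mpr hd0
  have hdlt : d < Fintype.card V := by
    have := G.degree_lt_card_verts i₀
    rwa [hreg i₀] at this
  have hcard2 : 2 ≤ Fintype.card V := by omega
  obtain ⟨j, hj⟩ := Fintype.exists_ne_of_one_lt_card (by omega) i₀
  have hLpos : 0 < lam := lt_of_le_of_ne (le_trans (abs_nonneg _) (hlam j hj)) (Ne.symm hL0)
  have hne : ∀ k, k ≠ i₀ → hA.eigenvalues k ≠ (d : ℝ) := by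
    intro k hk
    have h1 : hA.eigenvalues k ≤ lam := le_trans (le_abs_self _) (hlam k hk)
    intro h; rw [h] at h1; linarith
  have hdvec : (G.adjMatrix ℝ) *ᵥ (fun _ => (1:ℝ)) = (d : ℝ) • (fun _ => (1:ℝ)) := by
    ext v
    have := SimpleGraph.adjMatrix_mulVec_const_apply_of_regular (α := ℝ) (a := (1:ℝ)) hreg (v := v)
    simpa [Function.const] using this
  -- indicator vectors
  set Y := extNbhd G X with hY
  set S := X ∪ Y with hS
  have hdisj : Disjoint X Y := by
    rw [Finset.disjoint_left]
    intro v hv hv'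
    rw [hY, extNbhd, Finset.mem_filter] at hv'
    exact hv'.2.1 hv
  have hScard : (S.card : ℝ) = X.card + Y.card := by
    rw [hS, Finset.card_union_of_disjoint hdisj]; push_cast; ring
  set f : V → ℝ := fun v => if v ∈ X then 1 else 0 with hf
  set g : V → ℝ := fun v => if v ∈ S then 1 else 0 with hg
  have hfsum : ∑ v, f v = X.card := by
    simp [hf, Finset.sum_ite_mem, Finset.univ_inter]
  have hgsum : ∑ v, g v = S.card := by
    simp [hg, Finset.sum_ite_mem, Finset.univ_inter]
  have hfsq : ∑ v, f v ^ 2 = X.card := by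
    rw [← hfsum]; apply Finset.sum_congr rfl; intro v _; by_cases h : v ∈ X <;> simp [hf, h]
  have hgsq : ∑ v, g v ^ 2 = S.card := by
    rw [← hgsum]; apply Finset.sum_congr rfl; intro v _; by_cases h : v ∈ S <;> simp [hg, h]
  -- lower bound : all edges from X land in S
  have hlow : (d : ℝ) * X.card = f ⬝ᵥ ((G.adjMatrix ℝ) *ᵥ g) := by
    have hrow : ∀ u ∈ X, ((G.adjMatrix ℝ) *ᵥ g) u = d := by
      intro u hu
      rw [Matrix.mulVec, SimpleGraph.adjMatrix_dotProduct]
      have hnbr : ∀ w ∈ G.neighborFinset u, g w = 1 := by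
        intro w hw
        rw [SimpleGraph.mem_neighborFinset] at hw
        have hwS : w ∈ S := by
          by_cases hwX : w ∈ X
          · exact Finset.mem_union_left _ hwX
          · apply Finset.mem_union_right
            rw [hY, extNbhd, Finset.mem_filter]
            exact ⟨Finset.mem_univ _, hwX, ⟨u, hu, hw.symm⟩⟩
        simp [hg, hwS]
      rw [Finset.sum_congr rfl hnbr]
      simp [hreg u]
    rw [dotProduct]
    have : ∀ v ∈ Finset.univ, f v * ((G.adjMatrix ℝ) *ᵥ g) v
        = if v ∈ X then ((G.adjMatrix ℝ) *ᵥ g) v else 0 := by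
      intro v _; by_cases h : v ∈ X <;> simp [hf, h]
    rw [Finset.sum_congr rfl this, Finset.sum_ite_mem, Finset.univ_inter,
      Finset.sum_congr rfl hrow]
    simp [mul_comm]
  -- apply the mixing bound
  have hmix := mixing (G.adjMatrix ℝ) hA (d : ℝ) lam i₀ hdvec hi₀ hne
    (fun k hk => hlam k hk) hLpos.le f g
  rw [← hlow, hfsum, hgsum, hfsq, hgsq] at hmix
  clear hlow hfsum hgsum hfsq hgsq hf hg hdvec hdisj hne
  clear f g
  by_contra hcon
  push_neg at hcon
  set x : ℝ := (X.card : ℝ) with hxd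
  set y : ℝ := (Y.card : ℝ) with hyd
  set n : ℝ := (Fintype.card V : ℝ) with hnd
  set s : ℝ := (S.card : ℝ) with hsd
  set r : ℝ := Real.sqrt x with hrd
  set p : ℝ := Real.sqrt s with hpd
  have hnpos : (0:ℝ) < n := by
    have : Nonempty V := ⟨i₀⟩
    rw [hnd]; exact_mod_cast Fintype.card_pos
  have hx0 : 0 ≤ x := Nat.cast_nonneg _
  have hy0 : 0 ≤ y := Nat.cast_nonneg _
  have hs0 : 0 ≤ s := Nat.cast_nonneg _
  have hr2 : r ^ 2 = x := Real.sq_sqrt hx0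
  have hp2 : p ^ 2 = s := Real.sq_sqrt hs0
  have hTval : T * (16 * lam ^ 2) = (d:ℝ) ^ 2 := by
    rw [hT]; field_simp
  exact endgame (d:ℝ) lam T n x y s r p hLpos (by linarith) hTval hnpos hx0 hy0
    (Real.sqrt_nonneg _) (Real.sqrt_nonneg _) hr2 hp2 hScard hcon hX hmix
end

section
/- For every graph H with at most m vertices and at most m edges, there exists a graph H' with maximum degree at most 3, at most 3m vertices, and at most 3m edges, such that H is a minor of H'. -/
open Finset

namespace MinorAux

open SimpleGraph

attribute [local instance] Classical.propDecidable

variable {W : Type} [Fintype W] (H : SimpleGraph W)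

noncomputable def ix (w : W) : H.neighborSet w ≃ Fin (H.degree w) :=
  Fintype.equivFinOfCardEq (H.card_neighborSet_eq_degree w)

noncomputable def nidx (d : H.Dart) : ℕ := (ix H d.fst ⟨d.snd, d.adj⟩ : ℕ)

lemma nidx_lt (d : H.Dart) : nidx H d < H.degree d.fst := (ix H d.fst ⟨d.snd, d.adj⟩).2

noncomputable def dartAt (w : W) (i : Fin (H.degree w)) : H.Dart :=
  ⟨(w, ((ix H w).symm i : W)), ((ix H w).symm i).2⟩

@[simp] lemma dartAt_fst (w : W) (i : Fin (H.degree w)) : (dartAt H w i).fst = w := rfl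

@[simp] lemma nidx_dartAt (w : W) (i : Fin (H.degree w)) : nidx H (dartAt H w i) = i := by
  simp only [nidx, dartAt]
  rw [show (⟨((ix H w).symm i : W), ((ix H w).symm i).2⟩ : H.neighborSet w) = (ix H w).symm i from
    rfl]
  exact congrArg Fin.val ((ix H w).apply_symm_apply i)

lemma dart_eq {d d' : H.Dart} (h1 : d.fst = d'.fst) (h2 : nidx H d = nidx H d') : d = d' := by
  obtain ⟨⟨a, b⟩, hab⟩ := d
  obtain ⟨⟨a', b'⟩, hab'⟩ := d'
  simp only at h1
  subst h1
  simp only [nidx] at h2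
  have := (ix H a).injective (Fin.val_injective h2)
  replace this : b = b' := congrArg Subtype.val this
  simp [this]
noncomputable def r : (W ⊕ H.Dart) → (W ⊕ H.Dart) → Prop
  | Sum.inl w, Sum.inr d => d.fst = w ∧ nidx H d = 0
  | Sum.inr d, Sum.inr d' => d' = d.symm ∨ (d.fst = d'.fst ∧ nidx H d' = nidx H d + 1)
  | _, _ => False

noncomputable def G : SimpleGraph (W ⊕ H.Dart) := SimpleGraph.fromRel (r H)

lemma not_r_inl_inl (w w' : W) : ¬ r H (Sum.inl w) (Sum.inl w') := fun h => h
lemma not_r_inr_inl (d : H.Dart) (w : W) : ¬ r H (Sum.inr d) (Sum.inl w) := fun h => h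

def S (w : W) : Set (W ⊕ H.Dart) :=
  {x | x = Sum.inl w ∨ ∃ d : H.Dart, d.fst = w ∧ x = Sum.inr d}

lemma inl_mem_S (w : W) : (Sum.inl w : W ⊕ H.Dart) ∈ S H w := Or.inl rfl

lemma adj_core (d : H.Dart) (h0 : nidx H d = 0) : (G H).Adj (Sum.inl d.fst) (Sum.inr d) := by
  refine ⟨by simp, Or.inl ⟨rfl, h0⟩⟩

lemma adj_path (d d' : H.Dart) (hf : d.fst = d'.fst) (hn : nidx H d' = nidx H d + 1) :
    (G H).Adj (Sum.inr d) (Sum.inr d') := by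
  refine ⟨?_, Or.inl (Or.inr ⟨hf, hn⟩)⟩
  intro h
  rw [Sum.inr.injEq] at h
  subst h
  omega

lemma connected_S (w : W) : ((G H).induce (S H w)).Connected := by
  rw [SimpleGraph.connected_iff]
  refine ⟨?_, ⟨⟨Sum.inl w, inl_mem_S H w⟩⟩⟩
  have key : ∀ n (d : H.Dart) (hd : d.fst = w), nidx H d = n →
      ((G H).induce (S H w)).Reachable ⟨Sum.inr d, Or.inr ⟨d, hd, rfl⟩⟩
        ⟨Sum.inl w, inl_mem_S H w⟩ := by
    intro n
    induction n with
    | zero =>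
      intro d hd hn
      refine SimpleGraph.Adj.reachable ?_
      show (G H).Adj (Sum.inr d) (Sum.inl w)
      subst hd
      exact (adj_core H d hn).symm
    | succ n ih =>
      intro d hd hn
      have hlt : n < H.degree w := by
        have := nidx_lt H d
        rw [hd] at this
        omega
      set d0 := dartAt H w ⟨n, hlt⟩ with hd0
      have h1 : nidx H d0 = n := by simp [hd0]
      have hfst : d0.fst = w := by simp [hd0]
      have hadj : (G H).Adj (Sum.inr d0) (Sum.inr d) :=
        adj_path H d0 d (by simp [hd0, hd]) (by omega)
      have step : ((G H).induce (S H w)).Adj ⟨Sum.inr d, Or.inr ⟨d, hd, rfl⟩⟩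
          ⟨Sum.inr d0, Or.inr ⟨d0, hfst, rfl⟩⟩ := hadj.symm
      exact step.reachable.trans (ih d0 hfst h1)
  rintro ⟨x, hx⟩ ⟨y, hy⟩
  have reach : ∀ (x : W ⊕ H.Dart) (hx : x ∈ S H w),
      ((G H).induce (S H w)).Reachable ⟨x, hx⟩ ⟨Sum.inl w, inl_mem_S H w⟩ := by
    rintro x (rfl | ⟨d, hd, rfl⟩)
    · exact SimpleGraph.Reachable.refl _
    · exact key (nidx H d) d hd rfl
  exact (reach x hx).trans (reach y hy).symm
lemma deg_le (x : W ⊕ H.Dart) : ((G H).neighborSet x).ncard ≤ 3 := by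
  obtain (w | d) := x
  · have hsub : ((G H).neighborSet (Sum.inl w)).Subsingleton := by
      intro y hy z hz
      have hy' : (G H).Adj (Sum.inl w) y := hy
      have hz' : (G H).Adj (Sum.inl w) z := hz
      obtain ⟨-, hy2⟩ := hy'
      obtain ⟨-, hz2⟩ := hz'
      obtain (wy | dy) := y
      · exact absurd (hy2.resolve_right (not_r_inl_inl H _ _)) (not_r_inl_inl H _ _)
      · obtain (wz | dz) := z
        · exact absurd (hz2.resolve_right (not_r_inl_inl H _ _)) (not_r_inl_inl H _ _)
        · obtain ⟨hfy, hny⟩ : dy.fst = w ∧ nidx H dy = 0 :=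
            hy2.resolve_right (not_r_inr_inl H _ _)
          obtain ⟨hfz, hnz⟩ : dz.fst = w ∧ nidx H dz = 0 :=
            hz2.resolve_right (not_r_inr_inl H _ _)
          rw [Sum.inr.injEq]
          exact dart_eq H (hfy.trans hfz.symm) (hny.trans hnz.symm)
    rcases hsub.eq_empty_or_singleton with h | ⟨a, h⟩ <;> simp [h]
  · have hd1 := nidx_lt H d
    set prv : W ⊕ H.Dart := if h0 : nidx H d = 0 then Sum.inl d.fst
      else Sum.inr (dartAt H d.fst ⟨nidx H d - 1, by omega⟩) with hprv
    set nxt : W ⊕ H.Dart := if h : nidx H d + 1 < H.degree d.fst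
      then Sum.inr (dartAt H d.fst ⟨nidx H d + 1, h⟩) else Sum.inr d.symm with hnxt
    have hsub : (G H).neighborSet (Sum.inr d) ⊆ {Sum.inr d.symm, prv, nxt} := by
      intro y hy
      have hy' : (G H).Adj (Sum.inr d) y := hy
      obtain ⟨hne, hy2 | hy2⟩ := hy'
      · obtain (wy | dy) := y
        · exact absurd hy2 (not_r_inr_inl H _ _)
        · rcases hy2 with rfl | ⟨hf, hn⟩
          · exact Or.inl rfl
          · have hlt : nidx H d + 1 < H.degree d.fst := by
              have := nidx_lt H dy; rw [← hf] at this; omega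
            have : dy = dartAt H d.fst ⟨nidx H d + 1, hlt⟩ :=
              dart_eq H (by simp [hf]) (by simp [hn])
            right; right
            rw [hnxt, dif_pos hlt, this]
            rfl
      · obtain (wy | dy) := y
        · obtain ⟨hf, hn⟩ : d.fst = wy ∧ nidx H d = 0 := hy2
          right; left
          rw [hprv, dif_pos hn, hf]
        · rcases hy2 with rfl | ⟨hf, hn⟩
          · left
            rw [SimpleGraph.Dart.symm_symm]
          · have h0 : ¬ nidx H d = 0 := by omega
            have : dy = dartAt H d.fst ⟨nidx H d - 1, by omega⟩ :=
              dart_eq H (by simp [hf]) (by simp; omega)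
            right; left
            rw [hprv, dif_neg h0, this]
    calc ((G H).neighborSet (Sum.inr d)).ncard ≤ ({Sum.inr d.symm, prv, nxt} :
          Set (W ⊕ H.Dart)).ncard := Set.ncard_le_ncard hsub (Set.toFinite _)
      _ ≤ ({prv, nxt} : Set (W ⊕ H.Dart)).ncard + 1 := Set.ncard_insert_le _ _
      _ ≤ (({nxt} : Set (W ⊕ H.Dart)).ncard + 1) + 1 := by
          exact Nat.add_le_add_right (Set.ncard_insert_le _ _) 1
      _ ≤ 3 := by simp

lemma S_disjoint {w w' : W} (h : w ≠ w') : Disjoint (S H w) (S H w') := by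
  rw [Set.disjoint_left]
  rintro x (rfl | ⟨d, hd, rfl⟩) hx'
  · rcases hx' with h' | ⟨d, hd, h'⟩ <;> simp_all
  · rcases hx' with h' | ⟨d', hd', h'⟩
    · simp at h'
    · rw [Sum.inr.injEq] at h'
      subst h'
      exact h (hd ▸ hd' ▸ rfl)

lemma S_edge {a b : W} (hab : H.Adj a b) :
    ∃ u ∈ S H a, ∃ v ∈ S H b, (G H).Adj u v := by
  refine ⟨Sum.inr ⟨(a, b), hab⟩, Or.inr ⟨_, rfl, rfl⟩,
    Sum.inr (SimpleGraph.Dart.symm ⟨(a, b), hab⟩), Or.inr ⟨_, rfl, rfl⟩, ?_⟩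
  refine ⟨?_, Or.inl (Or.inl rfl)⟩
  simp only [ne_eq, Sum.inr.injEq]
  exact fun h => (SimpleGraph.Dart.symm_ne _) h.symm
lemma edge_cases (s : Sym2 (W ⊕ H.Dart)) (hs : s ∈ (G H).edgeSet) :
    (∃ d : H.Dart, s = s(Sum.inl d.fst, Sum.inr d) ∧ nidx H d = 0) ∨
    (∃ d d' : H.Dart, s = s(Sum.inr d, Sum.inr d') ∧ d.fst = d'.fst ∧
      nidx H d' = nidx H d + 1) ∨
    (∃ d : H.Dart, s = s(Sum.inr d, Sum.inr d.symm)) := by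
  induction s using Sym2.ind with
  | _ x y =>
    rw [SimpleGraph.mem_edgeSet] at hs
    obtain ⟨hne, h | h⟩ := hs
    · obtain (w | d) := x <;> obtain (w' | d') := y
      · exact absurd h (not_r_inl_inl H _ _)
      · obtain ⟨hf, hn⟩ := h
        exact Or.inl ⟨d', by rw [hf], hn⟩
      · exact absurd h (not_r_inr_inl H _ _)
      · rcases h with rfl | ⟨hf, hn⟩
        · exact Or.inr (Or.inr ⟨d, rfl⟩)
        · exact Or.inr (Or.inl ⟨d, d', rfl, hf, hn⟩)
    · obtain (w | d) := x <;> obtain (w' | d') := y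
      · exact absurd h (not_r_inl_inl H _ _)
      · exact absurd h (not_r_inr_inl H _ _)
      · obtain ⟨hf, hn⟩ := h
        exact Or.inl ⟨d, by rw [hf, Sym2.eq_swap], hn⟩
      · rcases h with rfl | ⟨hf, hn⟩
        · exact Or.inr (Or.inr ⟨d', Sym2.eq_swap⟩)
        · exact Or.inr (Or.inl ⟨d', d, Sym2.eq_swap, hf, hn⟩)

noncomputable def lo (d : H.Dart) : ℕ := (Fintype.equivFin H.Dart d : ℕ)

lemma lo_inj {a b : H.Dart} (h : lo H a = lo H b) : a = b :=
  (Fintype.equivFin H.Dart).injective (Fin.val_injective h)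

variable (d₀ : H.Dart)

noncomputable def g : (W ⊕ H.Dart) → (W ⊕ H.Dart) → H.Dart ⊕ H.edgeSet
  | Sum.inl _, Sum.inr d => Sum.inl d
  | Sum.inr d, Sum.inl _ => Sum.inl d
  | Sum.inr d, Sum.inr d' =>
      if d' = d.symm then Sum.inr ⟨d.edge, d.edge_mem⟩
      else if d.fst = d'.fst ∧ nidx H d' = nidx H d + 1 then Sum.inl d'
      else if d'.fst = d.fst ∧ nidx H d = nidx H d' + 1 then Sum.inl d
      else if lo H d ≤ lo H d' then Sum.inl d' else Sum.inl d
  | Sum.inl _, Sum.inl _ => Sum.inl d₀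

lemma g_inr_inr (d d' : H.Dart) : g H d₀ (Sum.inr d) (Sum.inr d') =
    (if d' = d.symm then Sum.inr ⟨d.edge, d.edge_mem⟩
      else if d.fst = d'.fst ∧ nidx H d' = nidx H d + 1 then Sum.inl d'
      else if d'.fst = d.fst ∧ nidx H d = nidx H d' + 1 then Sum.inl d
      else if lo H d ≤ lo H d' then Sum.inl d' else Sum.inl d) := rfl

lemma symm_iff_symm {d d' : H.Dart} : d' = d.symm ↔ d = d'.symm := by
  constructor <;> (rintro rfl; rw [SimpleGraph.Dart.symm_symm])

lemma g_symm (x y : W ⊕ H.Dart) : g H d₀ x y = g H d₀ y x := by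
  obtain (w | d) := x <;> obtain (w' | d') := y <;> try rfl
  rw [g_inr_inr, g_inr_inr]
  by_cases h1 : d' = d.symm
  · rw [if_pos h1, if_pos (symm_iff_symm H |>.mp h1), Sum.inr.injEq, Subtype.mk.injEq]
    subst h1
    rw [SimpleGraph.Dart.edge_symm]
  · rw [if_neg h1, if_neg (fun h => h1 ((symm_iff_symm H).mpr h))]
    by_cases h2 : d.fst = d'.fst ∧ nidx H d' = nidx H d + 1
    · have hB : ¬(d'.fst = d.fst ∧ nidx H d = nidx H d' + 1) := fun h => by
        obtain ⟨-, h2b⟩ := h2; omega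
      rw [if_pos h2, if_neg hB, if_pos h2]
    · rw [if_neg h2]
      by_cases h3 : d'.fst = d.fst ∧ nidx H d = nidx H d' + 1
      · rw [if_pos h3, if_pos h3]
      · rw [if_neg h3, if_neg h3, if_neg h2]
        rcases Nat.lt_trichotomy (lo H d) (lo H d') with hl | hl | hl
        · rw [if_pos (le_of_lt hl), if_neg (by omega)]
        · have : d = d' := lo_inj H hl
          subst this
          simp
        · rw [if_neg (by omega), if_pos (le_of_lt hl)]

noncomputable def f : Sym2 (W ⊕ H.Dart) → H.Dart ⊕ H.edgeSet :=
  Sym2.lift ⟨g H d₀, g_symm H d₀⟩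

@[simp] lemma f_mk (x y : W ⊕ H.Dart) : f H d₀ s(x, y) = g H d₀ x y := rfl
lemma g_core (w : W) (d : H.Dart) : g H d₀ (Sum.inl w) (Sum.inr d) = Sum.inl d := rfl

lemma g_path (d d' : H.Dart) (hf : d.fst = d'.fst) (hn : nidx H d' = nidx H d + 1) :
    g H d₀ (Sum.inr d) (Sum.inr d') = Sum.inl d' := by
  have h1 : d' ≠ d.symm := by
    intro h
    apply SimpleGraph.Dart.fst_ne_snd d
    rw [hf, h]
    rfl
  rw [g_inr_inr, if_neg h1, if_pos ⟨hf, hn⟩]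

lemma g_cross (d : H.Dart) :
    g H d₀ (Sum.inr d) (Sum.inr d.symm) = Sum.inr ⟨d.edge, d.edge_mem⟩ := by
  rw [g_inr_inr, if_pos rfl]

lemma f_inj (s t : Sym2 (W ⊕ H.Dart)) (hs : s ∈ (G H).edgeSet) (ht : t ∈ (G H).edgeSet)
    (hf : f H d₀ s = f H d₀ t) : s = t := by
  rcases edge_cases H s hs with ⟨d, rfl, hn⟩ | ⟨d, d', rfl, hfst, hn⟩ | ⟨d, rfl⟩ <;>
    rcases edge_cases H t ht with ⟨e, rfl, hm⟩ | ⟨e, e', rfl, hgst, hm⟩ | ⟨e, rfl⟩ <;>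
    simp only [f_mk] at hf
  · rw [g_core, g_core, Sum.inl.injEq] at hf
    subst hf; rfl
  · rw [g_core, g_path H d₀ e e' hgst hm, Sum.inl.injEq] at hf
    subst hf; omega
  · rw [g_core, g_cross] at hf
    exact absurd hf (by simp)
  · rw [g_path H d₀ d d' hfst hn, g_core, Sum.inl.injEq] at hf
    subst hf; omega
  · rw [g_path H d₀ d d' hfst hn, g_path H d₀ e e' hgst hm, Sum.inl.injEq] at hf
    subst hf
    have : d = e := dart_eq H (hfst.trans hgst.symm) (by omega)
    rw [this]
  · rw [g_path H d₀ d d' hfst hn, g_cross] at hf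
    exact absurd hf (by simp)
  · rw [g_cross, g_core] at hf
    exact absurd hf (by simp)
  · rw [g_cross, g_path H d₀ e e' hgst hm] at hf
    exact absurd hf (by simp)
  · rw [g_cross, g_cross, Sum.inr.injEq, Subtype.mk.injEq, SimpleGraph.dart_edge_eq_iff] at hf
    rcases hf with rfl | rfl
    · rfl
    · rw [SimpleGraph.Dart.symm_symm, Sym2.eq_swap]

lemma edge_ncard_le : (G H).edgeSet.ncard ≤ 3 * H.edgeSet.ncard := by
  by_cases hD : Nonempty H.Dart
  · obtain ⟨d₀⟩ := hD
    have hinj : Function.Injective (fun s : (G H).edgeSet => f H d₀ ↑s) := by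
      rintro ⟨s, hs⟩ ⟨t, ht⟩ h
      exact Subtype.ext (f_inj H d₀ s t hs ht h)
    have hdart : Nat.card H.Dart = 2 * H.edgeSet.ncard := by
      rw [Nat.card_eq_fintype_card, SimpleGraph.dart_card_eq_twice_card_edges,
        SimpleGraph.edgeFinset_card, ← Nat.card_coe_set_eq, Nat.card_eq_fintype_card]
    calc (G H).edgeSet.ncard = Nat.card (G H).edgeSet := (Nat.card_coe_set_eq _).symm
      _ ≤ Nat.card (H.Dart ⊕ H.edgeSet) := Nat.card_le_card_of_injective _ hinj
      _ = Nat.card H.Dart + Nat.card H.edgeSet := Nat.card_sum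
      _ = 2 * H.edgeSet.ncard + H.edgeSet.ncard := by
          rw [hdart, Nat.card_coe_set_eq]
      _ = 3 * H.edgeSet.ncard := by ring
  · have hempty : (G H).edgeSet = ∅ := by
      ext s
      simp only [Set.mem_empty_iff_false, iff_false]
      intro hs
      rcases edge_cases H s hs with ⟨d, -, -⟩ | ⟨d, -, -, -⟩ | ⟨d, -⟩ <;> exact hD ⟨d⟩
    simp [hempty]

lemma card_V : Fintype.card (W ⊕ H.Dart) = Fintype.card W + 2 * H.edgeSet.ncard := by
  rw [Fintype.card_sum, SimpleGraph.dart_card_eq_twice_card_edges,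
    SimpleGraph.edgeFinset_card, ← Nat.card_coe_set_eq, Nat.card_eq_fintype_card]

end MinorAux

/-- Every graph with at most `m` vertices and at most `m` edges is a minor of a graph of
maximum degree at most `3` with at most `3m` vertices and at most `3m` edges. -/
theorem minor_of_max_degree_three (m : ℕ) (W : Type) [Fintype W] (H : SimpleGraph W)
    (hv : Fintype.card W ≤ m) (he : H.edgeSet.ncard ≤ m) :
    ∃ (k : ℕ) (H' : SimpleGraph (Fin k)),
      k ≤ 3 * m ∧ H'.edgeSet.ncard ≤ 3 * m ∧
      (∀ v, (H'.neighborSet v).ncard ≤ 3) ∧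
      IsMinor H H' := by
  classical
  set G := MinorAux.G H with hG
  set k := Fintype.card (W ⊕ H.Dart) with hk
  set e : (W ⊕ H.Dart) ≃ Fin k := Fintype.equivFin _ with he'
  set H' : SimpleGraph (Fin k) := G.comap ⇑e.symm with hH'
  have φ : G ≃g H' := by
    refine ⟨e, ?_⟩
    intro a b
    show G.Adj (e.symm (e a)) (e.symm (e b)) ↔ G.Adj a b
    simp
  refine ⟨k, H', ?_, ?_, ?_, ?_⟩
  · rw [hk, MinorAux.card_V]
    omega
  · have h1 : H'.edgeSet.ncard = G.edgeSet.ncard := by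
      rw [← Nat.card_coe_set_eq, ← Nat.card_coe_set_eq]
      exact (Nat.card_congr φ.mapEdgeSet).symm
    have h2 := MinorAux.edge_ncard_le H
    rw [← hG] at h2
    omega
  · intro v
    have h1 : (H'.neighborSet v).ncard = (G.neighborSet (φ.symm v)).ncard := by
      rw [← Nat.card_coe_set_eq, ← Nat.card_coe_set_eq]
      exact Nat.card_congr (φ.symm.mapNeighborSet v)
    rw [h1]
    exact MinorAux.deg_le H _
  · refine ⟨fun w => ⇑e '' MinorAux.S H w, ?_, ?_, ?_⟩
    · intro h h' hne
      exact (Set.disjoint_image_iff e.injective).mpr (MinorAux.S_disjoint H hne)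
    · intro w
      have hc := MinorAux.connected_S H w
      let F : (G.induce (MinorAux.S H w)) →g (H'.induce (⇑e '' MinorAux.S H w)) :=
        { toFun := fun x => ⟨e x.1, ⟨x.1, x.2, rfl⟩⟩
          map_rel' := by
            rintro ⟨x, hx⟩ ⟨y, hy⟩ hxy
            show G.Adj (e.symm (e x)) (e.symm (e y))
            simpa using hxy }
      refine SimpleGraph.Connected.map F ?_ hc
      rintro ⟨z, x, hx, rfl⟩
      exact ⟨⟨x, hx⟩, rfl⟩
    · intro h h' hadj
      obtain ⟨u, hu, v, hvv, huv⟩ := MinorAux.S_edge H hadj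
      refine ⟨e u, ⟨u, hu, rfl⟩, e v, ⟨v, hvv, rfl⟩, ?_⟩
      show G.Adj (e.symm (e u)) (e.symm (e v))
      simpa using huv
end
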